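/- arXiv:2304.10738 — 9 statements merged into one kernel-verified Lean document; each statement's English description precedes it below -/
import Mathlib

section
/- Let L/H be an outer extension of division rings. Assume H is centrally finite and L/H is algebraic. Then the field extension Z(L)/Z(H) of centers is algebraic. -/
/-- `FinSpanOver F E` : there are finitely many elements of `E` such that every element
of `E` is a left linear combination of them with coefficients in the subring `F`.
When `F` is a division subring and `E` is (the carrier of) a division subring
containing `F`, this says exactly that `E` is finite-dimensional as a left
`F`-vector space, i.e. `[E : F] < ∞`. -/
def FinSpanOver {K : Type*} [Ring K] (F : Subring K) (E : Set K) : Prop :=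
  ∃ B : Finset K, ↑B ⊆ E ∧
    ∀ y ∈ E, ∃ c : K → K, (∀ b ∈ B, c b ∈ F) ∧ y = ∑ b ∈ B, c b * b

/-- `x` is algebraic over the division subring `F` of `K`: the smallest division
subring `F(x)` of `K` containing `F` and `x` satisfies `[F(x) : F] < ∞`. -/
def IsAlgebraicOver {K : Type*} [DivisionRing K] (F : Subfield K) (x : K) : Prop :=
  FinSpanOver F.toSubring (Subfield.closure ((F : Set K) ∪ {x}) : Set K)

/-- The center of a division subring `H` of `L`, as a subring of `L`:
`Z(H) = H ∩ C_L(H)`. -/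
def centerOf {L : Type*} [DivisionRing L] (H : Subfield L) : Subring L :=
  H.toSubring ⊓ Subring.centralizer (H : Set L)

/-
STATEMENT 3.
Let `L/H` be an outer extension of division rings (`H` a division subring of `L`, and
the centralizer of `H` in `L` equals the center of `L`).  Assume `H` is centrally
finite (`[H : Z(H)] < ∞`) and `L/H` is algebraic (every `x ∈ L` is algebraic over
`H`).  Then the field extension `Z(L)/Z(H)` is algebraic: every element `x` of the
center of `L` is algebraic over `Z(H)`, i.e. `[Z(H)(x) : Z(H)] < ∞`.
-/
theorem center_algebraic_of_outer_algebraic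
    (L : Type*) [DivisionRing L] (H : Subfield L)
    (houter : Subring.centralizer (H : Set L) = Subring.center L)
    (hHfin : FinSpanOver (centerOf H) (H : Set L))
    (halg : ∀ x : L, IsAlgebraicOver H x) :
    ∀ x ∈ Subring.center L,
      FinSpanOver (centerOf H)
        (Subfield.closure ((centerOf H : Set L) ∪ {x}) : Set L) := by
  intro x _hx
  classical
  -- `Z(H)` as a subfield of `L`
  let F : Subfield L :=
    { centerOf H with
      inv_mem' := fun a ha => by
        have ha' : a ∈ H.toSubring ∧ a ∈ Subring.centralizer (H : Set L) :=
          Subring.mem_inf.1 ha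
        refine Subring.mem_inf.2 ⟨H.inv_mem ha'.1, Subring.mem_centralizer_iff.2 ?_⟩
        intro g hg
        have hcomm : Commute g a := Subring.mem_centralizer_iff.1 ha'.2 g hg
        exact hcomm.inv_right₀ }
  have hFmem : ∀ a : L, a ∈ F ↔ a ∈ centerOf H := fun a => Iff.rfl
  have hFH : (centerOf H : Set L) ⊆ (H : Set L) := fun a ha => (Subring.mem_inf.1 ha).1
  obtain ⟨A, hAH, hA⟩ := hHfin
  obtain ⟨B, hBE, hB⟩ := halg x
  -- products of spanning sets
  let P : Finset L := (A ×ˢ B).image fun p => p.1 * p.2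
  -- `H(x)` is contained in the `F`-span of `P`
  have hHxP : (Subfield.closure ((H : Set L) ∪ {x}) : Set L)
      ⊆ (Submodule.span F (↑P : Set L) : Set L) := by
    intro y hy
    obtain ⟨c, hc, rfl⟩ := hB y hy
    refine Submodule.sum_mem _ fun b hb => ?_
    obtain ⟨d, hd, hcb⟩ := hA (c b) (hc b hb)
    rw [hcb, Finset.sum_mul]
    refine Submodule.sum_mem _ fun a ha => ?_
    have hab : a * b ∈ P :=
      Finset.mem_image.2 ⟨(a, b), Finset.mem_product.2 ⟨ha, hb⟩, rfl⟩
    have : d a * a * b = (⟨d a, (hFmem _).2 (hd a ha)⟩ : F) • (a * b) := by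
      show _ = d a * (a * b); rw [mul_assoc]
    rw [this]
    exact Submodule.smul_mem _ _ (Submodule.subset_span hab)
  -- `Z(H)(x)` as an `F`-submodule of `L`
  let E : Set L := (Subfield.closure ((centerOf H : Set L) ∪ {x}) : Set L)
  have hFE : (centerOf H : Set L) ⊆ E := fun a ha =>
    Subfield.subset_closure (Set.mem_union_left _ ha)
  let q : Submodule F L :=
    { carrier := E
      add_mem' := fun ha hb => Subfield.add_mem _ ha hb
      zero_mem' := Subfield.zero_mem _
      smul_mem' := fun c y hy => by
        have : c • y = (↑c : L) * y := rfl
        rw [this]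
        exact Subfield.mul_mem _ (hFE c.2) hy }
  -- `Z(H)(x) ⊆ H(x)`, hence inside the span of `P`
  have hEHx : E ⊆ (Subfield.closure ((H : Set L) ∪ {x}) : Set L) := by
    have := Subfield.closure_mono (Set.union_subset_union_left ({x} : Set L) hFH)
    exact fun a ha => this ha
  have hle : q ≤ Submodule.span F (↑P : Set L) := fun y hy => hHxP (hEHx hy)
  haveI : FiniteDimensional F q := Submodule.finiteDimensional_of_le hle
  have hfg : q.FG := (Submodule.fg_top q).1 (Module.finite_def.1 ‹FiniteDimensional F q›)
  obtain ⟨S, hS⟩ := hfg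
  refine ⟨S, ?_, ?_⟩
  · intro b hb
    have : b ∈ q := hS ▸ Submodule.subset_span hb
    exact this
  · intro y hy
    have : y ∈ Submodule.span F (↑S : Set L) := hS ▸ hy
    obtain ⟨f, -, hf⟩ := Submodule.mem_span_finset.1 this
    refine ⟨fun b => ↑(f b), fun b hb => (f b).2, ?_⟩
    rw [← hf]
    rfl
end

section
/- Let H be a centrally finite division ring and let L be a finite extension of H with Z(H) ⊆ Z(L). Let ψ : H ⊗_{Z(H)} Z(L) → L be the unique Z(H)-linear map with ψ(x ⊗ y) = xy for all x ∈ H, y ∈ Z(L). Then the following are equivalent: (i) ψ is an isomorphism of Z(H)-algebras; (ii) L/H is outer; (iii) [Z(L) : Z(H)] = [L : H]. -/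
open TensorProduct Module

set_option synthInstance.maxHeartbeats 400000


def centerRingHom {D L : Type*} [DivisionRing D] [DivisionRing L] (f : D →+* L)
    (hZ : ∀ x ∈ Subring.center D, f x ∈ Subring.center L) :
    Subring.center D →+* Subring.center L where
  toFun x := ⟨f x, hZ x x.2⟩
  map_one' := by ext; simp
  map_mul' x y := by ext; simp
  map_zero' := by ext; simp
  map_add' x y := by ext; simp



theorem indep_aux {D L : Type*} [DivisionRing D] [DivisionRing L] (f : D →+* L) {ι : Type*}
    (y : ι → L) (hyc : ∀ i, ∀ z : L, z * y i = y i * z)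
    (hind : ∀ (s : Finset ι) (c : ι → D), (∀ i ∈ s, ∀ d : D, c i * d = d * c i) →
      ∑ i ∈ s, f (c i) * y i = 0 → ∀ i ∈ s, c i = 0) :
    ∀ (s : Finset ι) (d : ι → D), ∑ i ∈ s, f (d i) * y i = 0 → ∀ i ∈ s, d i = 0 := by
  classical
  intro s
  induction s using Finset.strongInduction with
  | _ s ih =>
    intro d hsum
    by_contra hcon
    push_neg at hcon
    obtain ⟨i₀, hi₀s, hi₀⟩ := hcon
    set d' : ι → D := fun j => (d i₀)⁻¹ * d j with hd'
    have hd'i₀ : d' i₀ = 1 := inv_mul_cancel₀ hi₀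
    have hsum' : ∑ j ∈ s, f (d' j) * y j = 0 := by
      have h1 : ∑ j ∈ s, f (d' j) * y j = f ((d i₀)⁻¹) * ∑ j ∈ s, f (d j) * y j := by
        rw [Finset.mul_sum]
        refine Finset.sum_congr rfl fun j _ => ?_
        rw [hd', map_mul, mul_assoc]
      rw [h1, hsum, mul_zero]
    have hcentral : ∀ e : D, ∀ j ∈ s, e * d' j = d' j * e := by
      intro e j hjs
      rcases eq_or_ne j i₀ with rfl | hji
      · rw [hd'i₀, mul_one, one_mul]
      · have key : ∀ jj ∈ s.erase i₀, (fun jj => e * d' jj - d' jj * e) jj = 0 := by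
          apply ih (s.erase i₀) (Finset.erase_ssubset hi₀s)
          have hterm : f (e * d' i₀ - d' i₀ * e) * y i₀ = 0 := by
            rw [hd'i₀, mul_one, one_mul, sub_self, map_zero, zero_mul]
          rw [Finset.sum_erase s hterm]
          have expand : ∀ (w : D) (jj : ι), f (e * w - w * e) * y jj =
              f e * (f w * y jj) - (f w * y jj) * f e := by
            intro w jj
            rw [map_sub, map_mul, map_mul, sub_mul]
            congr 1
            · rw [mul_assoc]
            · rw [mul_assoc, mul_assoc, hyc jj (f e)]
          rw [Finset.sum_congr rfl (fun jj _ => expand (d' jj) jj), Finset.sum_sub_distrib,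
            ← Finset.mul_sum, ← Finset.sum_mul, hsum', mul_zero, zero_mul, sub_zero]
        have h2 := key j (Finset.mem_erase.mpr ⟨hji, hjs⟩)
        simpa [sub_eq_zero] using h2
    have h3 := hind s d' (fun j hjs e => (hcentral e j hjs).symm) hsum' i₀ hi₀s
    rw [hd'i₀] at h3
    exact one_ne_zero h3

set_option maxHeartbeats 1000000 in

theorem key_surjective {K A L : Type*} [Field K] [Ring A] [Algebra K A]
    [DivisionRing L] [Algebra K L] [FiniteDimensional K L] (g : A →+* L)
    (hKlin : ∀ (c : K) (a : A), g (c • a) = algebraMap K L c * g a)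
    (hginj : Function.Injective g)
    (hcent : ∀ x : L, (∀ a : A, g a * x = x * g a) → ∃ c : K, x = algebraMap K L c) :
    Function.Surjective g := by
  classical
  letI : Module A L := Module.compHom L g
  have hsmulA : ∀ (a : A) (x : L), a • x = g a * x := fun a x => rfl
  haveI : IsScalarTower K A L := ⟨fun c a x => by
    rw [hsmulA, hsmulA, hKlin, Algebra.smul_def, mul_assoc]⟩
  haveI : IsScalarTower K Lᵐᵒᵖ L := ⟨fun c lop x => by
    rw [MulOpposite.smul_eq_mul_unop, MulOpposite.smul_eq_mul_unop, MulOpposite.unop_smul,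
      Algebra.smul_def, Algebra.smul_def, ← mul_assoc, ← Algebra.commutes c x, mul_assoc]⟩
  haveI : SMulCommClass A Lᵐᵒᵖ L := ⟨fun a lop x => by
    rw [MulOpposite.smul_eq_mul_unop, MulOpposite.smul_eq_mul_unop, hsmulA, hsmulA, mul_assoc]⟩
  letI : Module (A ⊗[K] Lᵐᵒᵖ) L := TensorProduct.Algebra.module
  have hsmul_tmul : ∀ (a : A) (l : L) (x : L),
      (a ⊗ₜ[K] (MulOpposite.op l)) • x = g a * (x * l) := fun a l x => rfl
  -- L is a simple module over B := A ⊗[K] Lᵐᵒᵖ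
  haveI hsimple : IsSimpleModule (A ⊗[K] Lᵐᵒᵖ) L := by
    refine (isSimpleModule_iff _ _).mpr ?_; constructor
    intro W
    rcases eq_or_ne W ⊥ with h | h
    · exact Or.inl h
    · right
      obtain ⟨u, hu, hu0⟩ := Submodule.ne_bot_iff W |>.mp h
      rw [Submodule.eq_top_iff']
      intro z
      have hz : ((1 : A) ⊗ₜ[K] MulOpposite.op (u⁻¹ * z)) • u = z := by
        rw [hsmul_tmul, map_one, one_mul, ← mul_assoc, mul_inv_cancel₀ hu0, one_mul]
      exact hz ▸ W.smul_mem _ hu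
  set N := finrank K L with hN
  have hNpos : 0 < N := finrank_pos
  set bK : Basis (Fin N) K L := finBasis K L with hbK
  set v : Fin N → L := fun i => bK i with hv
  haveI : IsSemisimpleModule (A ⊗[K] Lᵐᵒᵖ) (Fin N → L) := by
    refine isSemisimpleModule_of_isSemisimpleModule_submodule'
      (p := fun i => LinearMap.range (LinearMap.single (A ⊗[K] Lᵐᵒᵖ) (fun _ : Fin N => L) i))
      (fun i => ?_) (LinearMap.iSup_range_single _ _)
    exact IsSemisimpleModule.congr
      (LinearEquiv.ofInjective (LinearMap.single (A ⊗[K] Lᵐᵒᵖ) (fun _ : Fin N => L) i)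
        (fun a b h => Pi.single_injective i h)).symm
  obtain ⟨W', hc⟩ := exists_isCompl (Submodule.span (A ⊗[K] Lᵐᵒᵖ) {v})
  set Wv := Submodule.span (A ⊗[K] Lᵐᵒᵖ) {v} with hWv
  set e : (Fin N → L) →ₗ[A ⊗[K] Lᵐᵒᵖ] (Fin N → L) :=
    Wv.subtype ∘ₗ Wv.projectionOnto W' hc with he
  have he_mem : ∀ x ∈ Wv, e x = x := by
    intro x hx
    show (Wv.subtype) (Wv.projectionOnto W' hc x) = x
    rw [show x = ((⟨x, hx⟩ : Wv) : Fin N → L) from rfl,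
      Submodule.projectionOnto_apply_left hc ⟨x, hx⟩]
    rfl
  have he_range : ∀ x, e x ∈ Wv := fun x => Subtype.coe_prop _
  -- component computations
  have hBsingle : ∀ (j : Fin N) (w : L),
      e (Pi.single j w) = fun i => (e (Pi.single j 1) i) * w := by
    intro j w
    have h1 : (Pi.single j w : Fin N → L) =
        ((1 : A) ⊗ₜ[K] MulOpposite.op w) • (Pi.single j 1 : Fin N → L) := by
      funext i
      rcases eq_or_ne i j with rfl | hij
      · rw [Pi.smul_apply, Pi.single_eq_same, Pi.single_eq_same, hsmul_tmul, map_one,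
          one_mul, one_mul]
      · rw [Pi.smul_apply, Pi.single_eq_of_ne hij, Pi.single_eq_of_ne hij, smul_zero]
    rw [h1, map_smul]
    funext i
    rw [Pi.smul_apply, hsmul_tmul, map_one, one_mul]
  have hAsingle : ∀ (j : Fin N) (a : A),
      e (Pi.single j (g a)) = fun i => g a * (e (Pi.single j 1) i) := by
    intro j a
    have h1 : (Pi.single j (g a) : Fin N → L) =
        (a ⊗ₜ[K] MulOpposite.op (1 : L)) • (Pi.single j 1 : Fin N → L) := by
      funext i
      rcases eq_or_ne i j with rfl | hij
      · rw [Pi.smul_apply, Pi.single_eq_same, Pi.single_eq_same, hsmul_tmul, one_mul, mul_one]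
      · rw [Pi.smul_apply, Pi.single_eq_of_ne hij, Pi.single_eq_of_ne hij, smul_zero]
    rw [h1, map_smul]
    funext i
    rw [Pi.smul_apply, hsmul_tmul, mul_one]
  have hq : ∀ (i j : Fin N), ∃ c : K, e (Pi.single j 1) i = algebraMap K L c := by
    intro i j
    refine hcent _ (fun a => ?_)
    have h1 := congrFun (hAsingle j a) i
    have h2 := congrFun (hBsingle j (g a)) i
    rw [h2] at h1
    exact h1.symm
  -- density
  have hdens : Function.Surjective
      (TensorProduct.Algebra.moduleAux : A ⊗[K] Lᵐᵒᵖ →ₗ[K] L →ₗ[K] L) := by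
    intro φ
    set Ψ : (Fin N → L) →+ (Fin N → L) :=
      { toFun := fun x i => φ (x i)
        map_zero' := by funext i; simp
        map_add' := by intro x x'; funext i; simp } with hΨ
    have hΨap : ∀ (x : Fin N → L) (i : Fin N), Ψ x i = φ (x i) := fun x i => rfl
    have hcomm : ∀ x : Fin N → L, e (Ψ x) = Ψ (e x) := by
      have hsingle : ∀ (j : Fin N) (w : L), e (Ψ (Pi.single j w)) = Ψ (e (Pi.single j w)) := by
        intro j w
        have h0 : Ψ (Pi.single j w) = Pi.single j (φ w) := by
          funext i
          rcases eq_or_ne i j with rfl | hij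
          · rw [hΨap, Pi.single_eq_same, Pi.single_eq_same]
          · rw [hΨap, Pi.single_eq_of_ne hij, Pi.single_eq_of_ne hij, map_zero]
        rw [h0]
        funext i
        obtain ⟨c, hcq⟩ := hq i j
        rw [hΨap, congrFun (hBsingle j (φ w)) i, congrFun (hBsingle j w) i, hcq,
          ← Algebra.smul_def, ← Algebra.smul_def, map_smul]
      intro x
      have hx : x = ∑ j, Pi.single j (x j) := (Finset.univ_sum_single x).symm
      rw [hx, map_sum, map_sum, map_sum, map_sum]
      exact Finset.sum_congr rfl fun j _ => hsingle j (x j)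
    have hvW : v ∈ Wv := Submodule.mem_span_singleton_self v
    have huW : Ψ v ∈ Wv := by
      have : Ψ v = e (Ψ v) := by rw [hcomm v, he_mem v hvW]
      rw [this]; exact he_range _
    obtain ⟨bb, hbb⟩ := Submodule.mem_span_singleton.mp huW
    refine ⟨bb, ?_⟩
    refine bK.ext fun i => ?_
    have h1 : TensorProduct.Algebra.moduleAux bb (bK i) = bb • (v i) := rfl
    rw [h1, ← Pi.smul_apply, hbb, hΨap]
  -- dimension count
  set gKlin : A →ₗ[K] L :=
    { toFun := g
      map_add' := map_add g
      map_smul' := fun c a => by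
        show g (c • a) = c • g a
        rw [hKlin c a, Algebra.smul_def] } with hgKlindef
  haveI : FiniteDimensional K A :=
    FiniteDimensional.of_injective gKlin (fun a b h => hginj h)
  haveI : Module.Finite K Lᵐᵒᵖ := Module.Finite.equiv (MulOpposite.opLinearEquiv K : L ≃ₗ[K] Lᵐᵒᵖ)
  haveI : Module.Finite K (A ⊗[K] Lᵐᵒᵖ) := inferInstance
  have hEnd : finrank K (L →ₗ[K] L) = N * N := finrank_linearMap K K L L
  have hB : finrank K (A ⊗[K] Lᵐᵒᵖ) = finrank K A * N := by
    rw [finrank_tensorProduct,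
      show finrank K Lᵐᵒᵖ = N from ((MulOpposite.opLinearEquiv K : L ≃ₗ[K] Lᵐᵒᵖ).finrank_eq).symm]
  have hle : N * N ≤ finrank K A * N := by
    have h1 := LinearMap.finrank_range_le
      (TensorProduct.Algebra.moduleAux : A ⊗[K] Lᵐᵒᵖ →ₗ[K] L →ₗ[K] L)
    rw [LinearMap.range_eq_top.mpr hdens, finrank_top, hEnd, hB] at h1
    exact h1
  have hNA : N ≤ finrank K A := Nat.le_of_mul_le_mul_right hle hNpos
  have hrange : LinearMap.range gKlin = ⊤ := by
    apply Submodule.eq_top_of_finrank_eq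
    refine le_antisymm (Submodule.finrank_le _) ?_
    rw [LinearMap.finrank_range_of_inj (f := gKlin) (fun a b h => hginj h)]
    exact hNA
  intro x
  obtain ⟨a, ha⟩ := LinearMap.range_eq_top.mp hrange x
  exact ⟨a, ha⟩

set_option maxHeartbeats 4000000 in
theorem finite_outer_extension_tfae
    (D L : Type*) [DivisionRing D] [DivisionRing L]
    (f : D →+* L)
    (hDfin : FiniteDimensional (Subring.center D) D)
    (hZ : ∀ x ∈ Subring.center D, f x ∈ Subring.center L) :
    letI : Module D L := f.toModule
    letI : Algebra (Subring.center D) (Subring.center L) := (centerRingHom f hZ).toAlgebra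
    letI : Module (Subring.center D) L :=
      (f.comp (Subring.center D).subtype).toModule
    Module.Finite D L →
    ∀ ψ : D ⊗[Subring.center D] (Subring.center L) →ₗ[Subring.center D] L,
      (∀ (x : D) (y : Subring.center L), ψ (x ⊗ₜ y) = f x * (y : L)) →
      (((Function.Bijective ψ ∧ ∀ a b, ψ (a * b) = ψ a * ψ b) ↔
          Subring.centralizer (Set.range f) = Subring.center L) ∧
       ((Function.Bijective ψ ∧ ∀ a b, ψ (a * b) = ψ a * ψ b) ↔
          Module.rank (Subring.center D) (Subring.center L) = Module.rank D L)) := by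
  letI : Module D L := f.toModule
  letI : Algebra (Subring.center D) (Subring.center L) := (centerRingHom f hZ).toAlgebra
  letI : Module (Subring.center D) L := (f.comp (Subring.center D).subtype).toModule
  intro hfin ψ hψ
  haveI : Module.Finite D L := hfin
  haveI : FiniteDimensional (Subring.center D) D := hDfin
  classical
  have hksmulK : ∀ (c : Subring.center D) (y : Subring.center L),
      ((c • y : Subring.center L) : L) = f c * y := fun _ _ => rfl
  have hycomm : ∀ (y : Subring.center L) (z : L), z * (y : L) = (y : L) * z :=
    fun y z => Subring.mem_center_iff.mp y.2 z
  -- multiplicativity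
  have hmul : ∀ a b, ψ (a * b) = ψ a * ψ b := by
    intro a b
    induction a using TensorProduct.induction_on with
    | zero => rw [zero_mul, ψ.map_zero, zero_mul]
    | add u v hu hv => rw [add_mul, ψ.map_add, ψ.map_add, add_mul, hu, hv]
    | tmul x y =>
      induction b using TensorProduct.induction_on with
      | zero => rw [mul_zero, ψ.map_zero, mul_zero]
      | add u v hu hv => rw [mul_add, ψ.map_add, ψ.map_add, mul_add, hu, hv]
      | tmul x' y' =>
        rw [Algebra.TensorProduct.tmul_mul_tmul, hψ, hψ, hψ, map_mul, Subring.coe_mul,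
          mul_assoc (f x), ← mul_assoc (f x') (y : L), hycomm y (f x'),
          mul_assoc (y : L), ← mul_assoc (f x)]
  have hone : ψ 1 = 1 := by
    rw [Algebra.TensorProduct.one_def, hψ, map_one, OneMemClass.coe_one, one_mul]
  set gR : (D ⊗[Subring.center D] (Subring.center L)) →+* L :=
    { toFun := ψ, map_one' := hone, map_mul' := hmul,
      map_zero' := ψ.map_zero, map_add' := ψ.map_add } with hgRdef
  have hgRap : ∀ w, gR w = ψ w := fun _ => rfl
  -- towers and finiteness
  haveI : IsScalarTower (Subring.center D) D L := ⟨fun c d x => by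
    show f (↑c * d) * x = f ↑c * (f d * x)
    rw [map_mul, mul_assoc]⟩
  haveI : Module.Finite (Subring.center D) L := Module.Finite.trans D L
  set incl : (Subring.center L) →ₗ[Subring.center D] L :=
    { toFun := fun y => (y : L), map_add' := fun _ _ => rfl,
      map_smul' := fun c y => rfl } with hincl
  have hinclinj : Function.Injective incl := Subtype.coe_injective
  haveI : Module.Finite (Subring.center D) (Subring.center L) :=
    FiniteDimensional.of_injective incl hinclinj
  set t := finrank (Subring.center D) (Subring.center L) with ht
  set b : Basis (Fin t) (Subring.center D) (Subring.center L) := finBasis _ _ with hb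
  -- linear independence of the basis of K over D inside L
  have hind0 := b.linearIndependent
  rw [linearIndependent_iff'] at hind0
  have hindep : ∀ (s : Finset (Fin t)) (dd : Fin t → D),
      (∑ i ∈ s, f (dd i) * ((b i : L))) = 0 → ∀ i ∈ s, dd i = 0 := by
    refine indep_aux f (fun i => ((b i : L))) (fun i z => hycomm (b i) z) ?_
    intro s c hc hsum
    set cc : Fin t → Subring.center D := fun i =>
      if h : i ∈ s then ⟨c i, Subring.mem_center_iff.mpr (fun g => (hc i h g).symm)⟩ else 0
      with hcc
    have hccs : ∀ i ∈ s, ((cc i : D)) = c i := by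
      intro i hi; rw [hcc]; simp only [dif_pos hi]
    have hsum2 : (∑ i ∈ s, cc i • b i) = 0 := by
      apply hinclinj
      rw [map_sum, map_zero]
      rw [← hsum]
      refine Finset.sum_congr rfl fun i hi => ?_
      show ((cc i • b i : Subring.center L) : L) = f (c i) * (b i : L)
      rw [hksmulK, hccs i hi]
    intro i hi
    have h1 := hind0 s cc hsum2 i hi
    have h2 := hccs i hi
    rw [h1] at h2
    exact h2.symm
  -- representation of tensors
  have hrep : ∀ w : D ⊗[Subring.center D] (Subring.center L),
      ∃ gg : Fin t →₀ D, w = gg.sum (fun i d => d ⊗ₜ[Subring.center D] (b i)) := by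
    intro w
    induction w using TensorProduct.induction_on with
    | zero => exact ⟨0, (Finsupp.sum_zero_index).symm⟩
    | tmul x y =>
      refine ⟨(b.repr y).mapRange (fun c => c • x) (zero_smul _ _), ?_⟩
      rw [Finsupp.sum_mapRange_index (h := fun i d => d ⊗ₜ[Subring.center D] (b i))
        (fun i => TensorProduct.zero_tmul _ _)]
      have h1 : ∀ i (c : Subring.center D), (c • x) ⊗ₜ[Subring.center D] (b i)
          = x ⊗ₜ[Subring.center D] (c • b i) := fun i c => TensorProduct.smul_tmul c x (b i)
      rw [Finsupp.sum_congr (g2 := fun i c => x ⊗ₜ[Subring.center D] (c • b i))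
        (fun i _ => h1 i ((b.repr y) i))]
      rw [Finsupp.sum, ← TensorProduct.tmul_sum]
      congr 1
      conv_lhs => rw [← b.linearCombination_repr y]
      rw [Finsupp.linearCombination_apply, Finsupp.sum]
    | add u w hu hw =>
      obtain ⟨g1, rfl⟩ := hu
      obtain ⟨g2, rfl⟩ := hw
      refine ⟨g1 + g2, ?_⟩
      rw [Finsupp.sum_add_index' (h := fun i d => d ⊗ₜ[Subring.center D] (b i))
        (fun i => TensorProduct.zero_tmul _ _) (fun i d d' => TensorProduct.add_tmul d d' (b i))]
  -- injectivity of ψ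
  have hinj : Function.Injective ψ := by
    rw [injective_iff_map_eq_zero]
    intro w hw
    obtain ⟨gg, rfl⟩ := hrep w
    have hsum0 : (∑ i ∈ gg.support, f (gg i) * ((b i : L))) = 0 := by
      rw [← hw, map_finsuppSum, Finsupp.sum]
      exact Finset.sum_congr rfl fun i _ => (hψ (gg i) (b i)).symm
    have hz := hindep gg.support gg hsum0
    have hgg : gg = 0 := Finsupp.ext fun i => by
      by_cases hi : i ∈ gg.support
      · exact hz i hi
      · exact Finsupp.notMem_support_iff.mp hi
    rw [hgg, Finsupp.sum_zero_index]
  -- (ii) → surjectivity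
  have hsurj_of_cent : Subring.centralizer (Set.range f) = Subring.center L →
      Function.Surjective ψ := by
    intro hcen
    letI : Algebra (Subring.center L) (D ⊗[Subring.center D] (Subring.center L)) :=
      Algebra.TensorProduct.rightAlgebra
    haveI : IsScalarTower (Subring.center D) (Subring.center L) L := ⟨fun c y x => by
      show ((c • y : Subring.center L) : L) * x = f ↑c * ((y : L) * x)
      rw [hksmulK, mul_assoc]⟩
    haveI : Module.Finite (Subring.center L) L :=
      FiniteDimensional.right (Subring.center D) (Subring.center L) L
    have hKlin : ∀ (c : Subring.center L) (w : D ⊗[Subring.center D] (Subring.center L)),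
        gR (c • w) = algebraMap (Subring.center L) L c * gR w := by
      intro c w
      have h1 : c • w = ((1 : D) ⊗ₜ[Subring.center D] c) * w := rfl
      rw [h1, hgRap, hgRap, hmul, hψ, map_one, one_mul]
      rfl
    have hc : ∀ x : L, (∀ a, gR a * x = x * gR a) →
        ∃ c : Subring.center L, x = algebraMap (Subring.center L) L c := by
      intro x hx
      have hx' : x ∈ Subring.centralizer (Set.range f) := by
        rw [Subring.mem_centralizer_iff]
        rintro z ⟨d, rfl⟩
        have h1 := hx (d ⊗ₜ[Subring.center D] 1)
        rw [hgRap, hψ, OneMemClass.coe_one, mul_one] at h1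
        exact h1
      rw [hcen] at hx'
      exact ⟨⟨x, hx'⟩, rfl⟩
    exact key_surjective gR hKlin (fun a b h => hinj h) hc
  -- surjectivity → (ii)
  have hcent_of_surj : Function.Surjective ψ →
      Subring.centralizer (Set.range f) = Subring.center L := by
    intro hsurj
    apply le_antisymm
    · intro x hx
      rw [Subring.mem_centralizer_iff] at hx
      rw [Subring.mem_center_iff]
      intro z
      obtain ⟨w, rfl⟩ := hsurj z
      induction w using TensorProduct.induction_on with
      | zero => rw [map_zero, zero_mul, mul_zero]
      | add u v hu hv => rw [map_add, add_mul, mul_add, hu, hv]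
      | tmul x' y =>
        rw [hψ]
        have h1 : f x' * x = x * f x' := hx (f x') ⟨x', rfl⟩
        rw [mul_assoc, ← hycomm y x, ← mul_assoc, h1, mul_assoc]
    · exact Subring.center_le_centralizer (Set.range f)
  -- dimensions
  have hfrtensor : finrank (Subring.center D) (D ⊗[Subring.center D] (Subring.center L))
      = finrank (Subring.center D) D * t := finrank_tensorProduct
  have hfrL : finrank (Subring.center D) D * finrank D L = finrank (Subring.center D) L :=
    finrank_mul_finrank _ D L
  have hn : 0 < finrank (Subring.center D) D := finrank_pos
  have hsurj_iff_t : Function.Surjective ψ ↔ t = finrank D L := by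
    constructor
    · intro hs
      have h0 : LinearMap.range ψ = ⊤ := LinearMap.range_eq_top.mpr hs
      have h1 : finrank (Subring.center D) (D ⊗[Subring.center D] (Subring.center L))
          = finrank (Subring.center D) L := by
        rw [← LinearMap.finrank_range_of_inj hinj, h0, finrank_top]
      rw [hfrtensor, ← hfrL] at h1
      exact Nat.eq_of_mul_eq_mul_left hn h1
    · intro hteq
      have hfr : finrank (Subring.center D) (D ⊗[Subring.center D] (Subring.center L))
          = finrank (Subring.center D) L := by rw [hfrtensor, hteq, hfrL]
      have hrange : LinearMap.range ψ = ⊤ := by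
        apply Submodule.eq_top_of_finrank_eq
        rw [LinearMap.finrank_range_of_inj hinj, hfr]
      exact LinearMap.range_eq_top.mp hrange
  have hrank_iff : (Module.rank (Subring.center D) (Subring.center L) = Module.rank D L)
      ↔ t = finrank D L := by
    rw [← Module.finrank_eq_rank (Subring.center D) (Subring.center L),
      ← Module.finrank_eq_rank D L, Nat.cast_inj]
  refine ⟨⟨?_, ?_⟩, ⟨?_, ?_⟩⟩
  · rintro ⟨hbij, -⟩
    exact hcent_of_surj hbij.2
  · intro hcen
    exact ⟨⟨hinj, hsurj_of_cent hcen⟩, hmul⟩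
  · rintro ⟨hbij, -⟩
    exact hrank_iff.mpr (hsurj_iff_t.mp hbij.2)
  · intro hr
    exact ⟨⟨hinj, hsurj_iff_t.mpr (hrank_iff.mp hr)⟩, hmul⟩
end

section
/- Let L/H be an outer extension of division rings. Then the extension L((T))/H is outer, where L((T)) is the division ring of formal Laurent series over L in a central variable T. -/
lemma hahn_comm_of_coeff_central {L : Type*} [DivisionRing L]
    (x y : HahnSeries ℤ L) (h : ∀ n, x.coeff n ∈ Subring.center L) : y * x = x * y := by
  ext a
  simp_rw [HahnSeries.coeff_mul]
  have key : ∀ i j, y.coeff i * x.coeff j = x.coeff j * y.coeff i :=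
    fun i j => Subring.mem_center_iff.mp (h j) _
  refine Finset.sum_equiv (Equiv.prodComm _ _) (fun p ↦ Finset.swap_mem_addAntidiagonal.symm)
    (fun p hp ↦ ?_)
  simpa using (key p.1 p.2)

/-
STATEMENT 7.
Let `L/H` be an outer extension of division rings (`H` a division subring of `L`;
outer means: the centralizer of `H` in `L` is the center of `L`).  Then the extension
`L((T))/H` is outer, where `L((T))` is the division ring of formal Laurent series over
`L` in a central variable `T` (formalized as `LaurentSeries L = HahnSeries ℤ L`, with
`H` embedded via the constant-series ring homomorphism `HahnSeries.C`).
-/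
theorem laurent_series_outer
    (L : Type*) [DivisionRing L] (H : Subfield L)
    (houter : Subring.centralizer (H : Set L) = Subring.center L) :
    Subring.centralizer ((HahnSeries.C : L →+* LaurentSeries L) '' (H : Set L)) =
      Subring.center (LaurentSeries L) := by
  ext x
  rw [Subring.mem_centralizer_iff, Subring.mem_center_iff]
  constructor
  · intro hx y
    -- all coefficients of x are in centralizer of H, hence central
    have hcoeff : ∀ n, x.coeff n ∈ Subring.center L := by
      intro n
      rw [← houter]
      rw [Subring.mem_centralizer_iff]
      intro a ha
      have := hx (HahnSeries.C a) ⟨a, ha, rfl⟩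
      have hn := congrArg (fun z => HahnSeries.coeff z n) this
      simpa [HahnSeries.C_apply, HahnSeries.coeff_single_zero_mul,
        HahnSeries.coeff_mul_single_zero] using hn
    exact hahn_comm_of_coeff_central x y hcoeff
  · intro hx y hy
    obtain ⟨a, _, rfl⟩ := hy
    exact hx _
end

section
/- Let H be a division ring and n ≥ 1. Then the extension H(T₁, …, Tₙ)/H is outer, i.e., the centralizer of H in H(T₁, …, Tₙ) equals the center of H(T₁, …, Tₙ). -/
/-
STATEMENT 8.
Let `H` be a division ring and `n ≥ 1`.  The polynomial ring `H[T₁, …, Tₙ]` in `n`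
central variables is formalized as the monoid algebra `AddMonoidAlgebra H (Fin n →₀ ℕ)`
(whose variables are central), and its quotient division ring `H(T₁, …, Tₙ)` is
axiomatized as a division ring `K` with an injective ring homomorphism
`ι : H[T₁, …, Tₙ] →+* K` such that every element of `K` is of the form `ι p * (ι q)⁻¹`.
Then the extension `H(T₁, …, Tₙ)/H` is outer: the centralizer of (the image of) `H`
in `K` equals the center of `K`.
-/
theorem rational_function_skew_field_outer
    (H K : Type*) [DivisionRing H] [DivisionRing K] (n : ℕ) (hn : 1 ≤ n)
    (ι : AddMonoidAlgebra H (Fin n →₀ ℕ) →+* K) (hinj : Function.Injective ι)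
    (hquot : ∀ z : K, ∃ p q : AddMonoidAlgebra H (Fin n →₀ ℕ), q ≠ 0 ∧ z = ι p * (ι q)⁻¹) :
    Subring.centralizer
        (Set.range (ι.comp AddMonoidAlgebra.singleZeroRingHom)) =
      Subring.center K := by
  -- monomials with coefficient 1 are central in the polynomial ring
  have hcen : ∀ (e : Fin n →₀ ℕ) (x : AddMonoidAlgebra H (Fin n →₀ ℕ)),
      Commute (AddMonoidAlgebra.single e 1) x := by
    intro e x
    induction x using AddMonoidAlgebra.induction_linear with
    | zero => exact Commute.zero_right _
    | add _ _ h1 h2 => exact h1.add_right h2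
    | single f b =>
        show _ = _
        rw [AddMonoidAlgebra.single_mul_single, AddMonoidAlgebra.single_mul_single,
          one_mul, mul_one, add_comm]
  -- hence their images are central in K
  have hKcen : ∀ (e : Fin n →₀ ℕ) (k : K), Commute (ι (AddMonoidAlgebra.single e 1)) k := by
    intro e k
    obtain ⟨p, q, hq, rfl⟩ := hquot k
    have hp : Commute (ι (AddMonoidAlgebra.single e 1)) (ι p) := by
      simpa using (hcen e p).map ι
    have hq' : Commute (ι (AddMonoidAlgebra.single e 1)) (ι q)⁻¹ := by
      exact (by simpa using (hcen e q).map ι : Commute _ (ι q)).inv_right₀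
    exact hp.mul_right hq'
  ext z
  constructor
  · intro hz
    rw [Subring.mem_center_iff]
    intro k
    have hz' := Subring.mem_centralizer_iff.mp hz
    have hcomm : ∀ p : AddMonoidAlgebra H (Fin n →₀ ℕ), Commute z (ι p) := by
      intro p
      induction p using AddMonoidAlgebra.induction_linear with
      | zero => simpa using Commute.zero_right z
      | add _ _ h1 h2 => rw [map_add]; exact h1.add_right h2
      | single f b =>
          have hb : ι (AddMonoidAlgebra.singleZeroRingHom b) * z
              = z * ι (AddMonoidAlgebra.singleZeroRingHom b) :=
            hz' _ ⟨b, rfl⟩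
          have hfac : (AddMonoidAlgebra.single (0 : Fin n →₀ ℕ) b)
              * AddMonoidAlgebra.single f (1 : H) = AddMonoidAlgebra.single f b := by
            rw [AddMonoidAlgebra.single_mul_single, zero_add, mul_one]
          calc z * ι (AddMonoidAlgebra.single f b)
              = z * (ι (AddMonoidAlgebra.single 0 b) * ι (AddMonoidAlgebra.single f 1)) := by
                rw [← map_mul, hfac]
            _ = ι (AddMonoidAlgebra.single 0 b) * ι (AddMonoidAlgebra.single f 1) * z := by
                have hb' : ι (AddMonoidAlgebra.single (0 : Fin n →₀ ℕ) b) * z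
                    = z * ι (AddMonoidAlgebra.single (0 : Fin n →₀ ℕ) b) := hb
                rw [← mul_assoc, ← hb', mul_assoc, ← (hKcen f z).eq, ← mul_assoc]
            _ = ι (AddMonoidAlgebra.single f b) * z := by rw [← map_mul, hfac]
    obtain ⟨p, q, hq, rfl⟩ := hquot k
    exact ((hcomm p).mul_right ((hcomm q).inv_right₀)).symm.eq
  · intro hz
    rw [Subring.mem_centralizer_iff]
    intro g _
    exact (Subring.mem_center_iff.mp hz g)
end

section
/- Let H be a centrally finite division ring, n ≥ 1, and f ∈ Z(H)(T₁, …, Tₙ). Then the unique Z(H)-linear map ψ : H ⊗_{Z(H)} Z(H)(f) → H(f) satisfying ψ(x ⊗ y) = xy for all x ∈ H, y ∈ Z(H)(f) is an isomorphism of Z(H)-algebras. In particular, Z(H(f)) = Z(H)(f). -/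
open TensorProduct

noncomputable section

variable {H K : Type*} [DivisionRing H] [DivisionRing K]

/-- The embedding of the coefficient division ring `H` into the quotient division ring
`K` of the polynomial ring `H[T₁, …, Tₙ] = AddMonoidAlgebra H (Fin n →₀ ℕ)`. -/
def constEmb (n : ℕ) (ι : AddMonoidAlgebra H (Fin n →₀ ℕ) →+* K) : H →+* K :=
  ι.comp AddMonoidAlgebra.singleZeroRingHom

/-- `Z(H)(f)`: the smallest subfield of the (commutative) center of `K` containing
(the image of) `Z(H)` and `f`. -/
def centerAdjoin (n : ℕ) (ι : AddMonoidAlgebra H (Fin n →₀ ℕ) →+* K)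
    (f : K) (hf : f ∈ Subring.center K) : Subfield (Subring.center K) :=
  Subfield.closure
    ({x : Subring.center K | (x : K) ∈ constEmb n ι '' (Subring.center H : Set H)} ∪
      {⟨f, hf⟩})

/-- The natural ring homomorphism `Z(H) → Z(H)(f)`. -/
def centerToCenterAdjoin (n : ℕ) (ι : AddMonoidAlgebra H (Fin n →₀ ℕ) →+* K)
    (f : K) (hf : f ∈ Subring.center K)
    (hcent : ∀ a ∈ Subring.center H, constEmb n ι a ∈ Subring.center K) :
    Subring.center H →+* centerAdjoin n ι f hf where
  toFun x := ⟨⟨constEmb n ι x, hcent x x.2⟩,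
    Subfield.subset_closure (Or.inl ⟨(x : H), x.2, rfl⟩)⟩
  map_one' := by refine Subtype.ext (Subtype.ext ?_); simp
  map_mul' x y := by refine Subtype.ext (Subtype.ext ?_); simp
  map_zero' := by refine Subtype.ext (Subtype.ext ?_); simp
  map_add' x y := by refine Subtype.ext (Subtype.ext ?_); simp

/-
STATEMENT 9 (Lemma `dl`).
Let `H` be a centrally finite division ring, `n ≥ 1`, and let `K` be the quotient
division ring `H(T₁, …, Tₙ)` of the polynomial ring in `n` central variables
(axiomatized by the injective homomorphism `ι` and the fraction property `hquot`).
Let `f` be an element of `Z(H)(T₁, …, Tₙ)`, identified with the center of `K`.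
Then the unique `Z(H)`-linear map `ψ : H ⊗_{Z(H)} Z(H)(f) → H(f)` satisfying
`ψ (x ⊗ y) = x * y` is an isomorphism of `Z(H)`-algebras: viewed as a map into `K`,
`ψ` is injective, multiplicative, and has image exactly `H(f)` (the smallest
division subring of `K` containing `H` and `f`).  In particular
`Z(H(f)) = Z(H)(f)`.
-/
lemma indep_aux_s9 {n : ℕ} {ι : AddMonoidAlgebra H (Fin n →₀ ℕ) →+* K}
    {J : Type*} [DecidableEq J] (γ : J → K) (hγ : ∀ j, γ j ∈ Subring.center K) :
    ∀ s : Finset J,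
      (∀ z : J → Subring.center H,
        ∑ j ∈ s, constEmb n ι (z j) * γ j = 0 → ∀ j ∈ s, z j = 0) →
      ∀ h : J → H, ∑ j ∈ s, constEmb n ι (h j) * γ j = 0 → ∀ j ∈ s, h j = 0 := by
  intro s
  induction s using Finset.strongInduction with
  | _ s ih =>
  intro hind h hrel j hj
  have hrestrict : ∀ t : Finset J, t ⊆ s →
      (∀ z : J → Subring.center H,
        ∑ k ∈ t, constEmb n ι (z k) * γ k = 0 → ∀ k ∈ t, z k = 0) := by
    intro t hts z hz k hk
    have hz' : ∑ k ∈ s, constEmb n ι ((fun k => if k ∈ t then z k else 0) k) * γ k = 0 := by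
      rw [← Finset.sum_subset hts]
      · rw [← hz]; apply Finset.sum_congr rfl; intro k hk; simp only [if_pos hk]
      · intro k _ hk; simp only [if_neg hk]; simp
    have := hind _ hz' k (hts hk)
    simpa [if_pos hk] using this
  by_cases hall : ∀ k ∈ s, h k ≠ 0
  · -- all nonzero: derive contradiction
    exfalso
    set x : H := (h j)⁻¹ with hx
    set h' : J → H := fun k => (h j)⁻¹ * h k with hh'
    have hrel' : ∑ k ∈ s, constEmb n ι (h' k) * γ k = 0 := by
      have : ∑ k ∈ s, constEmb n ι (h' k) * γ k
          = constEmb n ι ((h j)⁻¹) * ∑ k ∈ s, constEmb n ι (h k) * γ k := by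
        rw [Finset.mul_sum]; apply Finset.sum_congr rfl; intro k _
        rw [hh']; simp [map_mul, mul_assoc]
      rw [this, hrel, mul_zero]
    have hj' : h' j = 1 := inv_mul_cancel₀ (hall j hj)
    have hcomm : ∀ k ∈ s.erase j, ∀ a : H, a * h' k = h' k * a := by
      intro k hk a
      rcases eq_or_ne a 0 with rfl | ha
      · simp
      · have hconj : ∑ k ∈ s, constEmb n ι (a * h' k * a⁻¹ - h' k) * γ k = 0 := by
          have e1 : ∀ k ∈ s, constEmb n ι (a * h' k * a⁻¹) * γ k
              = constEmb n ι a * (constEmb n ι (h' k) * γ k) * (constEmb n ι a)⁻¹ := by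
            intro k _
            have hc := (Subring.mem_center_iff.1 (hγ k)) ((constEmb n ι a)⁻¹)
            calc constEmb n ι (a * h' k * a⁻¹) * γ k
                = constEmb n ι a * constEmb n ι (h' k) * ((constEmb n ι a)⁻¹ * γ k) := by
                  rw [map_mul, map_mul, map_inv₀, mul_assoc]
              _ = constEmb n ι a * constEmb n ι (h' k) * (γ k * (constEmb n ι a)⁻¹) := by rw [hc]
              _ = constEmb n ι a * (constEmb n ι (h' k) * γ k) * (constEmb n ι a)⁻¹ := by
                  simp only [mul_assoc]
          have e2 : ∑ k ∈ s, constEmb n ι (a * h' k * a⁻¹) * γ k = 0 := by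
            rw [Finset.sum_congr rfl e1, ← Finset.sum_mul, ← Finset.mul_sum, hrel',
              mul_zero, zero_mul]
          calc ∑ k ∈ s, constEmb n ι (a * h' k * a⁻¹ - h' k) * γ k
              = ∑ k ∈ s, (constEmb n ι (a * h' k * a⁻¹) * γ k - constEmb n ι (h' k) * γ k) := by
                apply Finset.sum_congr rfl; intro k _; rw [map_sub, sub_mul]
            _ = 0 := by rw [Finset.sum_sub_distrib, e2, hrel', sub_zero]
        have hzero : ∀ k ∈ s.erase j, a * h' k * a⁻¹ - h' k = 0 := by
          apply ih (s.erase j) (Finset.erase_ssubset hj) (hrestrict _ (Finset.erase_subset _ _))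
          rw [Finset.sum_erase _ (by rw [hj']; simp [mul_inv_cancel₀ ha])]
          exact hconj
        have := hzero k hk
        have h1 : a * h' k * a⁻¹ = h' k := sub_eq_zero.1 this
        calc a * h' k = a * h' k * (a⁻¹ * a) := by rw [inv_mul_cancel₀ ha, mul_one]
          _ = (a * h' k * a⁻¹) * a := (mul_assoc (a * h' k) a⁻¹ a).symm
          _ = h' k * a := by rw [h1]
    -- now all h' k central, contradiction with independence
    have hz : ∀ k, ∃ z : Subring.center H, k ∈ s → (z : H) = h' k := by
      intro k
      by_cases hk : k ∈ s
      · by_cases hkj : k = j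
        · subst hkj; exact ⟨1, fun _ => by rw [hj']; rfl⟩
        · exact ⟨⟨h' k, Subring.mem_center_iff.2 (fun a => hcomm k (Finset.mem_erase.2 ⟨hkj, hk⟩) a)⟩, fun _ => rfl⟩
      · exact ⟨0, fun h => absurd h hk⟩
    choose z hzval using hz
    have : ∀ k ∈ s, z k = 0 := by
      apply hind
      rw [← hrel']
      apply Finset.sum_congr rfl
      intro k hk; rw [hzval k hk]
    have hzj := this j hj
    have : (1 : H) = 0 := by
      rw [← hj', ← hzval j hj, hzj]; simp
    exact one_ne_zero this
  · push_neg at hall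
    obtain ⟨j₀, hj₀s, hj₀⟩ := hall
    by_cases hjj : j = j₀
    · subst hjj; exact hj₀
    · have hrel2 : ∑ k ∈ s.erase j₀, constEmb n ι (h k) * γ k = 0 := by
        rw [Finset.sum_erase _ (by rw [hj₀]; simp)]; exact hrel
      exact ih (s.erase j₀) (Finset.erase_ssubset hj₀s)
        (hrestrict _ (Finset.erase_subset _ _)) h hrel2 j (Finset.mem_erase.2 ⟨hjj, hj⟩)

set_option maxHeartbeats 16000000 in
set_option synthInstance.maxHeartbeats 1000000 in
theorem tensor_center_adjoin_iso
    (n : ℕ) (hn : 1 ≤ n)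
    (hHfin : FiniteDimensional (Subring.center H) H)
    (ι : AddMonoidAlgebra H (Fin n →₀ ℕ) →+* K) (hinj : Function.Injective ι)
    (hquot : ∀ z : K, ∃ p q : AddMonoidAlgebra H (Fin n →₀ ℕ), q ≠ 0 ∧ z = ι p * (ι q)⁻¹)
    (f : K) (hf : f ∈ Subring.center K) :
    ∀ hcent : ∀ a ∈ Subring.center H, constEmb n ι a ∈ Subring.center K,
    letI : Algebra (Subring.center H) (centerAdjoin n ι f hf) :=
      (centerToCenterAdjoin n ι f hf hcent).toAlgebra
    letI : Module (Subring.center H) K :=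
      ((constEmb n ι).comp (Subring.center H).subtype).toModule
    (∀ ψ : H ⊗[Subring.center H] (centerAdjoin n ι f hf) →ₗ[Subring.center H] K,
      (∀ (x : H) (y : centerAdjoin n ι f hf), ψ (x ⊗ₜ y) = constEmb n ι x * ((y : Subring.center K) : K)) →
      Function.Injective ψ ∧
      Set.range ψ = (Subfield.closure (Set.range (constEmb n ι) ∪ {f}) : Set K) ∧
      ∀ a b, ψ (a * b) = ψ a * ψ b) ∧
    {x : K | x ∈ Subfield.closure (Set.range (constEmb n ι) ∪ {f}) ∧
        ∀ y ∈ Subfield.closure (Set.range (constEmb n ι) ∪ {f}), x * y = y * x} =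
      (fun z : Subring.center K => (z : K)) '' (centerAdjoin n ι f hf : Set (Subring.center K)) := by
  intro hcent
  set C := centerAdjoin n ι f hf with hC
  letI instAlgC : Algebra (Subring.center H) C :=
    (centerToCenterAdjoin n ι f hf hcent).toAlgebra
  letI instModK : Module (Subring.center H) K :=
    ((constEmb n ι).comp (Subring.center H).subtype).toModule
  let valHom : C →+* K := ((Subring.center K).subtype).comp (Subfield.subtype C)
  have hsmulK : ∀ (z : Subring.center H) (k : K), z • k = constEmb n ι z * k := fun _ _ => rfl
  have hsmulH : ∀ (z : Subring.center H) (x : H), z • x = (z : H) * x := fun _ _ => rfl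
  have hvalz : ∀ z : Subring.center H,
      valHom (centerToCenterAdjoin n ι f hf hcent z) = constEmb n ι z := fun _ => rfl
  have hvalinj : Function.Injective valHom := fun a b hab => Subtype.ext (Subtype.ext hab)
  have hvalcent : ∀ c : C, valHom c ∈ Subring.center K := fun c => c.1.2
  have hsmulC : ∀ (z : Subring.center H) (c : C),
      valHom (z • c) = constEmb n ι z * valHom c := by
    intro z c
    rw [Algebra.smul_def, map_mul]
    exact congrArg (· * valHom c) (hvalz z)
  have hvalcoe : ∀ y : C, valHom y = ((y : Subring.center K) : K) := fun _ => rfl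
  letI : DecidableEq ↑(Module.Basis.ofVectorSpaceIndex (Subring.center H) C) := Classical.decEq _
  let bC := Module.Basis.ofVectorSpace (Subring.center H) C
  let J := ↑(Module.Basis.ofVectorSpaceIndex (Subring.center H) C)
  let γ : J → K := fun j => valHom (bC j)
  have hγcent : ∀ j, γ j ∈ Subring.center K := fun j => hvalcent _
  have hbind : ∀ (s : Finset J) (z : J → Subring.center H),
      ∑ j ∈ s, constEmb n ι (z j) * γ j = 0 → ∀ j ∈ s, z j = 0 := by
    intro s z hz
    have h1 : valHom (∑ j ∈ s, z j • bC j) = 0 := by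
      rw [map_sum, ← hz]
      exact Finset.sum_congr rfl fun j _ => hsmulC _ _
    have h0 : ∑ j ∈ s, z j • bC j = 0 := hvalinj (by rw [h1, map_zero])
    exact linearIndependent_iff'.1 bC.linearIndependent s z h0
  let Φ : (H ⊗[Subring.center H] C) ≃ₗ[Subring.center H] (J →₀ H) :=
    (TensorProduct.congr (LinearEquiv.refl (Subring.center H) H) bC.repr).trans
      (TensorProduct.finsuppScalarRight (Subring.center H) (Subring.center H) H J)
  let Fcomp : J → H →ₗ[Subring.center H] K := fun j =>
    { toFun := fun x => constEmb n ι x * γ j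
      map_add' := by
        intro a b
        show constEmb n ι (a + b) * γ j = constEmb n ι a * γ j + constEmb n ι b * γ j
        rw [map_add, add_mul]
      map_smul' := by
        intro z x
        show constEmb n ι (z • x) * γ j = z • (constEmb n ι x * γ j)
        rw [hsmulH, hsmulK, map_mul, mul_assoc] }
  let Fmap : (J →₀ H) →ₗ[Subring.center H] K := Finsupp.lsum ℕ Fcomp
  have hFsingle : ∀ (j : J) (x : H), Fmap (Finsupp.single j x) = constEmb n ι x * γ j := by
    intro j x
    simp [Fmap, Fcomp]
  have hFapply : ∀ l : J →₀ H, Fmap l = ∑ j ∈ l.support, constEmb n ι (l j) * γ j := by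
    intro l
    rfl
  have hψF : ∀ (ψ : H ⊗[Subring.center H] C →ₗ[Subring.center H] K),
      (∀ (x : H) (y : C), ψ (x ⊗ₜ y) = constEmb n ι x * ((y : Subring.center K) : K)) →
      ∀ t, ψ t = Fmap (Φ t) := by
    intro ψ hψ t
    have heq : ψ = Fmap ∘ₗ (Φ : H ⊗[Subring.center H] C →ₗ[Subring.center H] (J →₀ H)) := by
      apply TensorProduct.ext
      refine LinearMap.ext fun x => bC.ext fun j => ?_
      simp only [LinearMap.compr₂ₛₗ_apply, TensorProduct.mk_apply, LinearMap.comp_apply,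
        LinearEquiv.coe_coe]
      rw [hψ, ← hvalcoe]
      have hΦ : Φ (x ⊗ₜ bC j) = Finsupp.single j x := by
        simp only [Φ, LinearEquiv.trans_apply, TensorProduct.congr_tmul,
          LinearEquiv.refl_apply, Module.Basis.repr_self]
        rw [TensorProduct.finsuppScalarRight_apply_tmul, Finsupp.sum_single_index]
        · rw [one_smul]
        · rw [zero_smul, Finsupp.single_zero]
      rw [hΦ, hFsingle]
    rw [heq]
    rfl

  -- injectivity
  have hinjpsi : ∀ (ψ : H ⊗[Subring.center H] C →ₗ[Subring.center H] K),
      (∀ (x : H) (y : C), ψ (x ⊗ₜ y) = constEmb n ι x * ((y : Subring.center K) : K)) →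
      Function.Injective ψ := by
    intro ψ hψ a b hab
    have h0 : ψ (a - b) = 0 := by rw [map_sub, hab, sub_self]
    rw [hψF ψ hψ, hFapply] at h0
    have hl := indep_aux_s9 γ hγcent (Φ (a - b)).support (hbind _) (Φ (a - b)) h0
    have hz : Φ (a - b) = 0 := Finsupp.ext fun j => by
      by_cases hj : j ∈ (Φ (a - b)).support
      · exact hl j hj
      · exact Finsupp.notMem_support_iff.1 hj
    have := (LinearEquiv.map_eq_zero_iff Φ).1 hz
    exact sub_eq_zero.1 this
  -- multiplicativity
  have hmulpsi : ∀ (ψ : H ⊗[Subring.center H] C →ₗ[Subring.center H] K),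
      (∀ (x : H) (y : C), ψ (x ⊗ₜ y) = constEmb n ι x * ((y : Subring.center K) : K)) →
      ∀ a b, ψ (a * b) = ψ a * ψ b := by
    intro ψ hψ a b
    induction a using TensorProduct.induction_on with
    | zero => rw [zero_mul, map_zero, zero_mul]
    | tmul x y =>
      induction b using TensorProduct.induction_on with
      | zero => rw [mul_zero, map_zero, mul_zero]
      | tmul x' y' =>
        rw [Algebra.TensorProduct.tmul_mul_tmul, hψ, hψ, hψ]
        rw [← hvalcoe, ← hvalcoe, ← hvalcoe, map_mul, map_mul]
        have hc := Subring.mem_center_iff.1 (hvalcent y) (constEmb n ι x')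
        calc constEmb n ι x * constEmb n ι x' * (valHom y * valHom y')
            = constEmb n ι x * (constEmb n ι x' * valHom y) * valHom y' := by
              simp only [mul_assoc]
          _ = constEmb n ι x * (valHom y * constEmb n ι x') * valHom y' := by rw [hc]
          _ = constEmb n ι x * valHom y * (constEmb n ι x' * valHom y') := by
              simp only [mul_assoc]
      | add b1 b2 ih1 ih2 => rw [mul_add, map_add, map_add, ih1, ih2, mul_add]
    | add a1 a2 ih1 ih2 => rw [add_mul, map_add, map_add, ih1, ih2, add_mul]
  -- H(f)
  set Lf : Subfield K := Subfield.closure (Set.range (constEmb n ι) ∪ {f}) with hLf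
  have hCsubL : ∀ c : C, valHom c ∈ Lf := by
    intro c
    have hle : C ≤ Subfield.comap (Subring.center K).subtype Lf := by
      rw [hC]
      apply Subfield.closure_le.2
      rintro x (hx | hx)
      · obtain ⟨a, _, hax⟩ := hx
        simp only [SetLike.mem_coe, Subfield.mem_comap]
        have hmem : constEmb n ι a ∈ Lf := Subfield.subset_closure (Or.inl ⟨a, rfl⟩)
        rw [hax] at hmem
        exact hmem
      · rw [Set.mem_singleton_iff] at hx
        subst hx
        simp only [SetLike.mem_coe, Subfield.mem_comap]
        exact Subfield.subset_closure (Or.inr rfl)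
    have := hle c.2
    rwa [Subfield.mem_comap] at this
  letI instModCK : Module C K := valHom.toModule
  have hsmulCK : ∀ (c : C) (k : K), c • k = valHom c * k := fun _ _ => rfl
  let bH := Module.finBasis (Subring.center H) H
  -- range
  have hrange : ∀ (ψ : H ⊗[Subring.center H] C →ₗ[Subring.center H] K),
      (∀ (x : H) (y : C), ψ (x ⊗ₜ y) = constEmb n ι x * ((y : Subring.center K) : K)) →
      Set.range ψ = (Lf : Set K) := by
    intro ψ hψ
    have hmul := hmulpsi ψ hψ
    have h1mem : (1 : K) ∈ Set.range ψ := ⟨1 ⊗ₜ 1, by rw [hψ]; simp⟩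
    have hrsub : ∀ t, ψ t ∈ Lf := by
      intro t
      induction t using TensorProduct.induction_on with
      | zero => rw [map_zero]; exact zero_mem Lf
      | tmul x y =>
        rw [hψ, ← hvalcoe]
        exact mul_mem (Subfield.subset_closure (Or.inl ⟨x, rfl⟩)) (hCsubL y)
      | add a b iha ihb => rw [map_add]; exact add_mem iha ihb
    let Arange : Submodule C K :=
      { carrier := Set.range ψ
        add_mem' := by rintro a b ⟨s, rfl⟩ ⟨t, rfl⟩; exact ⟨s + t, map_add ψ s t⟩
        zero_mem' := ⟨0, map_zero ψ⟩
        smul_mem' := by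
          rintro c x ⟨t, rfl⟩
          refine ⟨(1 ⊗ₜ c) * t, ?_⟩
          rw [hmul, hψ, map_one, one_mul]; exact (hsmulCK c (ψ t)).symm }
    let A' : Submodule C K := Submodule.span C (Set.range fun i => constEmb n ι (bH i))
    have hAeq : A' = Arange := by
      apply le_antisymm
      · rw [Submodule.span_le]
        rintro x ⟨i, rfl⟩
        exact ⟨bH i ⊗ₜ 1, by rw [hψ]; simp⟩
      · rintro x ⟨t, rfl⟩
        induction t using TensorProduct.induction_on with
        | zero => rw [map_zero]; exact Submodule.zero_mem _
        | tmul x y =>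
          rw [hψ, ← hvalcoe]
          have hx : constEmb n ι x ∈ A' := by
            have hrepr : constEmb n ι x
                = ∑ i, (centerToCenterAdjoin n ι f hf hcent (bH.repr x i)) •
                    constEmb n ι (bH i) := by
              conv_lhs => rw [← Module.Basis.sum_repr bH x]
              rw [map_sum]
              exact Finset.sum_congr rfl fun i _ => by
                rw [hsmulH, map_mul, hsmulCK, hvalz]
            rw [hrepr]
            exact Submodule.sum_mem _ fun i _ =>
              Submodule.smul_mem _ _ (Submodule.subset_span ⟨i, rfl⟩)
          have hc := Subring.mem_center_iff.1 (hvalcent y) (constEmb n ι x)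
          rw [hc, ← hsmulCK]
          exact Submodule.smul_mem _ _ hx
        | add a b iha ihb => rw [map_add]; exact Submodule.add_mem _ iha ihb
    haveI hfdA' : FiniteDimensional C A' := FiniteDimensional.span_of_finite C (Set.finite_range _)
    haveI hfdA : FiniteDimensional C Arange := hAeq ▸ hfdA'
    have h1memA : (1 : K) ∈ Arange := h1mem
    have hinvmem : ∀ x ∈ Set.range ψ, x ≠ 0 → x⁻¹ ∈ Set.range ψ := by
      intro x hx hx0
      let Lm : Arange →ₗ[C] Arange :=
        { toFun := fun v => ⟨x * v, by
            obtain ⟨s, hs⟩ := hx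
            obtain ⟨t, ht⟩ := v.2
            exact ⟨s * t, by rw [hmul, hs, ht]⟩⟩
          map_add' := by
            intro u v; apply Subtype.ext
            show x * ((u : K) + (v : K)) = x * u + x * v
            rw [mul_add]
          map_smul' := by
            intro c v; apply Subtype.ext
            show x * (c • (v : K)) = c • (x * (v : K))
            rw [hsmulCK, hsmulCK]
            have hc := Subring.mem_center_iff.1 (hvalcent c) x
            rw [← mul_assoc, hc, mul_assoc] }
      have hLinj : Function.Injective Lm := by
        intro u v huv
        apply Subtype.ext
        have h2 : x * u = x * v := congrArg Subtype.val huv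
        exact mul_left_cancel₀ hx0 h2
      obtain ⟨v, hv⟩ := (LinearMap.injective_iff_surjective).1 hLinj ⟨1, h1memA⟩
      have hxv : x * v = 1 := congrArg Subtype.val hv
      rw [inv_eq_of_mul_eq_one_right hxv]
      exact v.2
    apply Set.Subset.antisymm
    · rintro x ⟨t, rfl⟩
      exact hrsub t
    · intro x hx
      rw [SetLike.mem_coe, hLf] at hx
      refine Subfield.closure_induction (p := fun x _ => x ∈ Set.range ψ)
        ?_ ?_ ?_ ?_ ?_ ?_ hx
      · rintro y (⟨a, rfl⟩ | hy)
        · exact ⟨a ⊗ₜ 1, by rw [hψ]; simp⟩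
        · rw [Set.mem_singleton_iff] at hy
          refine ⟨1 ⊗ₜ ⟨⟨f, hf⟩, Subfield.subset_closure (Or.inr rfl)⟩, ?_⟩
          rw [hψ, hy]; simp
      · exact h1mem
      · rintro u v _ _ ⟨s, rfl⟩ ⟨t, rfl⟩
        exact ⟨s + t, map_add ψ s t⟩
      · rintro u _ ⟨t, rfl⟩
        exact ⟨-t, map_neg ψ t⟩
      · intro u _ hu
        rcases eq_or_ne u 0 with rfl | h0
        · rw [inv_zero]; exact hu
        · exact hinvmem u hu h0
      · rintro u v _ _ ⟨s, rfl⟩ ⟨t, rfl⟩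
        exact ⟨s * t, hmul s t⟩
  -- construct Ψ
  let Bmap : H →ₗ[Subring.center H] C →ₗ[Subring.center H] K :=
    { toFun := fun x =>
        { toFun := fun y => constEmb n ι x * valHom y
          map_add' := by
            intro a b
            show constEmb n ι x * valHom (a + b)
              = constEmb n ι x * valHom a + constEmb n ι x * valHom b
            rw [map_add, mul_add]
          map_smul' := by
            intro z c
            show constEmb n ι x * valHom (z • c) = z • (constEmb n ι x * valHom c)
            rw [hsmulC, hsmulK]
            have hcz := Subring.mem_center_iff.1 (hcent z z.2) (constEmb n ι x)
            rw [← mul_assoc, hcz, mul_assoc] }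
      map_add' := by
        intro a b
        refine LinearMap.ext fun c => ?_
        show constEmb n ι (a + b) * valHom c
          = constEmb n ι a * valHom c + constEmb n ι b * valHom c
        rw [map_add, add_mul]
      map_smul' := by
        intro z x
        refine LinearMap.ext fun c => ?_
        show constEmb n ι (z • x) * valHom c = z • (constEmb n ι x * valHom c)
        rw [hsmulH, map_mul, hsmulK, mul_assoc] }
  let Ψ : H ⊗[Subring.center H] C →ₗ[Subring.center H] K := TensorProduct.lift Bmap
  have hΨ : ∀ (x : H) (y : C), Ψ (x ⊗ₜ y) = constEmb n ι x * ((y : Subring.center K) : K) :=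
    fun x y => TensorProduct.lift.tmul x y
  refine ⟨fun ψ hψ => ⟨hinjpsi ψ hψ, hrange ψ hψ, hmulpsi ψ hψ⟩, ?_⟩
  -- second conjunct
  ext x
  simp only [Set.mem_setOf_eq, Set.mem_image, SetLike.mem_coe]
  constructor
  · rintro ⟨hxL, hxcomm⟩
    have hxr : x ∈ Set.range Ψ := by rw [hrange Ψ hΨ]; exact hxL
    obtain ⟨t, rfl⟩ := hxr
    have hxF : Ψ t = ∑ j ∈ (Φ t).support, constEmb n ι (Φ t j) * γ j := by
      rw [hψF Ψ hΨ, hFapply]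
    have hcentral : ∀ j ∈ (Φ t).support, Φ t j ∈ Subring.center H := by
      intro j hjs
      rw [Subring.mem_center_iff]
      intro a
      rcases eq_or_ne a 0 with rfl | ha
      · rw [zero_mul, mul_zero]
      · have hιa : constEmb n ι a ≠ 0 := fun h => one_ne_zero (α := K) (by
          rw [← map_one (constEmb n ι), ← inv_mul_cancel₀ ha, map_mul, h, mul_zero])
        have hcm : Ψ t * constEmb n ι a = constEmb n ι a * Ψ t :=
          hxcomm _ (Subfield.subset_closure (Or.inl ⟨a, rfl⟩))
        have e2 : ∑ j ∈ (Φ t).support, constEmb n ι (a * Φ t j * a⁻¹) * γ j = Ψ t := by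
          have e1 : ∀ j ∈ (Φ t).support, constEmb n ι (a * Φ t j * a⁻¹) * γ j
              = constEmb n ι a * (constEmb n ι (Φ t j) * γ j) * (constEmb n ι a)⁻¹ := by
            intro j _
            have hcg := (Subring.mem_center_iff.1 (hγcent j)) ((constEmb n ι a)⁻¹)
            calc constEmb n ι (a * Φ t j * a⁻¹) * γ j
                = constEmb n ι a * constEmb n ι (Φ t j) * ((constEmb n ι a)⁻¹ * γ j) := by
                  rw [map_mul, map_mul, map_inv₀, mul_assoc]
              _ = constEmb n ι a * constEmb n ι (Φ t j) * (γ j * (constEmb n ι a)⁻¹) := by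
                  rw [hcg]
              _ = constEmb n ι a * (constEmb n ι (Φ t j) * γ j) * (constEmb n ι a)⁻¹ := by
                  simp only [mul_assoc]
          rw [Finset.sum_congr rfl e1, ← Finset.sum_mul, ← Finset.mul_sum, ← hxF, ← hcm,
            mul_assoc, mul_inv_cancel₀ hιa, mul_one]
        have hrel : ∑ j ∈ (Φ t).support,
            constEmb n ι (a * Φ t j * a⁻¹ - Φ t j) * γ j = 0 := by
          calc ∑ j ∈ (Φ t).support, constEmb n ι (a * Φ t j * a⁻¹ - Φ t j) * γ j
              = ∑ j ∈ (Φ t).support,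
                  (constEmb n ι (a * Φ t j * a⁻¹) * γ j - constEmb n ι (Φ t j) * γ j) := by
                exact Finset.sum_congr rfl fun j _ => by rw [map_sub, sub_mul]
            _ = 0 := by rw [Finset.sum_sub_distrib, e2, ← hxF, sub_self]
        have hsub := indep_aux_s9 γ hγcent (Φ t).support (hbind _)
          (fun j => a * Φ t j * a⁻¹ - Φ t j) hrel j hjs
        have h1 : a * Φ t j * a⁻¹ = Φ t j := sub_eq_zero.1 hsub
        calc a * Φ t j = a * Φ t j * (a⁻¹ * a) := by rw [inv_mul_cancel₀ ha, mul_one]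
          _ = (a * Φ t j * a⁻¹) * a := (mul_assoc (a * Φ t j) a⁻¹ a).symm
          _ = Φ t j * a := by rw [h1]
    let c : C := ∑ j ∈ (Φ t).support.attach,
      ((⟨Φ t j.1, hcentral j.1 j.2⟩ : Subring.center H) • bC j.1)
    refine ⟨(c : Subring.center K), c.2, ?_⟩
    have hvc : valHom c = ∑ j ∈ (Φ t).support.attach, constEmb n ι (Φ t j.1) * γ j.1 := by
      rw [map_sum]
      exact Finset.sum_congr rfl fun j _ => hsmulC _ _
    have : valHom c = Ψ t := by
      rw [hvc, hxF]
      exact Finset.sum_attach (Φ t).support (fun j => constEmb n ι ((Φ t) j) * γ j)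
    exact this
  · rintro ⟨z, hz, rfl⟩
    exact ⟨hCsubL ⟨z, hz⟩, fun y _ => (Subring.mem_center_iff.1 z.2 y).symm⟩


end
end

section
/- In ℍ(X), the element j does not belong to the image φ(ℂ(T, σ)). Consequently, for every division ring L with ℂ ⊆ L ⊆ ℂ(T, σ), the left φ(L)-vector space φ(L) + φ(L)j has dimension 2 over φ(L). -/
noncomputable section

/-- The quaternion `j`. -/
def qj : Quaternion ℝ := ⟨0, 0, 1, 0⟩

/-- The quaternion `k`. -/
def qk : Quaternion ℝ := ⟨0, 0, 0, 1⟩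

/-- The identification of `ℂ` with the subring `ℝ ⊕ ℝi` of Hamilton's quaternions. -/
def qc (a : ℂ) : Quaternion ℝ := ⟨a.re, a.im, 0, 0⟩

/-- The automorphism `σ` of `ℍ`: `a + bi + cj + dk ↦ a - bi + cj - dk`. -/
def qsigma (q : Quaternion ℝ) : Quaternion ℝ := ⟨q.re, -q.imI, q.imJ, -q.imK⟩

variable {M : Type*} [DivisionRing M]

/- `ℍ(X)`, the quotient division ring of the polynomial ring `ℍ[X]` in a central
variable `X`, is axiomatized as a division ring `M` together with an injective ring
homomorphism `κ : ℍ[X] →+* M` such that every element of `M` is `κ p * (κ q)⁻¹`.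
The injective ring homomorphism `φ : ℂ(T, σ) → ℍ(X)` (extending
`Σ aᵢTⁱ ↦ Σ aᵢjⁱXⁱ`, where `σ` is complex conjugation) identifies `ℂ(T, σ)` with
the division subring of `M` generated by `ℂ` and `jX`; under this identification,
`φ(T) = jX` and a division ring `L` with `ℂ ⊆ L ⊆ ℂ(T, σ)` corresponds to its image
`φ(L)`, a division subring of `M` squeezed between `ℂ` and `φ(ℂ(T, σ)) = ℂ(jX)`. -/

/-- The image of `ℂ` in `M = ℍ(X)`. -/
def complexSet (κ : Polynomial (Quaternion ℝ) →+* M) : Set M :=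
  Set.range fun a : ℂ => κ (Polynomial.C (qc a))

/-- The element `j` of `M = ℍ(X)`. -/
def jElem (κ : Polynomial (Quaternion ℝ) →+* M) : M := κ (Polynomial.C qj)

/-- The element `jX = φ(T)` of `M = ℍ(X)`. -/
def jXElem (κ : Polynomial (Quaternion ℝ) →+* M) : M :=
  κ (Polynomial.C qj * Polynomial.X)

/-- `φ(ℂ(T, σ))`: the smallest division subring of `M = ℍ(X)` containing `ℂ` and
`jX`, i.e. the image of `ℂ(T, σ)` under the embedding `φ`. -/
def phiImage (κ : Polynomial (Quaternion ℝ) →+* M) : Subfield M :=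
  Subfield.closure (complexSet κ ∪ {jXElem κ})

/-- `s : M →+* M` is the extension to `M = ℍ(X)` of the order-2 automorphism `σ` of
`ℍ` (`a + bi + cj + dk ↦ a - bi + cj - dk`), acting coefficientwise on `ℍ[X]`. -/
def IsSigmaExtension (κ : Polynomial (Quaternion ℝ) →+* M) (s : M →+* M) : Prop :=
  ∀ p : Polynomial (Quaternion ℝ),
    s (κ p) = κ (p.sum fun n q => Polynomial.C (qsigma q) * Polynomial.X ^ n)


section Swap14aux

open Polynomial Finset

namespace Swap14

/-- Allowed coefficient at position `n`: `ℂ` for even `n`, `ℂ·j` for odd `n`. -/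
def ok (n : ℕ) (a : Quaternion ℝ) : Prop :=
  if Even n then a.imJ = 0 ∧ a.imK = 0 else a.re = 0 ∧ a.imI = 0

def isR (a : Quaternion ℝ) : Prop := a.imI = 0 ∧ a.imJ = 0 ∧ a.imK = 0

def PSet : Set (Polynomial (Quaternion ℝ)) := {p | ∀ n, ok n (p.coeff n)}

def QSet : Set (Polynomial (Quaternion ℝ)) :=
  {q | ∀ n, isR (q.coeff n) ∧ (¬ Even n → q.coeff n = 0)}

lemma ok_zero (n : ℕ) : ok n 0 := by unfold ok; split <;> exact ⟨rfl, rfl⟩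

lemma ok_add {n : ℕ} {a b : Quaternion ℝ} (ha : ok n a) (hb : ok n b) : ok n (a + b) := by
  unfold ok at *
  split at ha <;> split at hb <;> simp_all [Quaternion.imJ_add, Quaternion.imK_add,
    Quaternion.re_add, Quaternion.imI_add]

lemma ok_neg {n : ℕ} {a : Quaternion ℝ} (ha : ok n a) : ok n (-a) := by
  unfold ok at *
  split at ha <;> split <;> simp_all

def okGrp (n : ℕ) : AddSubgroup (Quaternion ℝ) where
  carrier := {a | ok n a}
  zero_mem' := ok_zero n
  add_mem' := ok_add
  neg_mem' := ok_neg

lemma mem_okGrp {n : ℕ} {a : Quaternion ℝ} : a ∈ okGrp n ↔ ok n a := Iff.rfl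

lemma ok_mul {m n : ℕ} {a b : Quaternion ℝ} (ha : ok m a) (hb : ok n b) :
    ok (m + n) (a * b) := by
  unfold ok at *
  rcases Nat.even_or_odd m with hm | hm <;> rcases Nat.even_or_odd n with hn | hn
  · have h2 : Even (m + n) := hm.add hn
    simp only [if_pos hm] at ha
    simp only [if_pos hn] at hb
    simp [h2, Quaternion.imJ_mul, Quaternion.imK_mul, ha.1, ha.2, hb.1, hb.2]
  · have h2 : ¬ Even (m + n) := by simp [Nat.even_add, hm, Nat.not_even_iff_odd.2 hn]
    simp only [if_pos hm] at ha
    simp only [if_neg (Nat.not_even_iff_odd.2 hn)] at hb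
    simp [h2, Quaternion.re_mul, Quaternion.imI_mul, ha.1, ha.2, hb.1, hb.2]
  · have h2 : ¬ Even (m + n) := by simp [Nat.even_add, hn, Nat.not_even_iff_odd.2 hm]
    simp only [if_neg (Nat.not_even_iff_odd.2 hm)] at ha
    simp only [if_pos hn] at hb
    simp [h2, Quaternion.re_mul, Quaternion.imI_mul, ha.1, ha.2, hb.1, hb.2]
  · have h2 : Even (m + n) := by
      rw [Nat.even_add]; simp [Nat.not_even_iff_odd.2 hm, Nat.not_even_iff_odd.2 hn]
    simp only [if_neg (Nat.not_even_iff_odd.2 hm)] at ha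
    simp only [if_neg (Nat.not_even_iff_odd.2 hn)] at hb
    simp [h2, Quaternion.imJ_mul, Quaternion.imK_mul, ha.1, ha.2, hb.1, hb.2]

lemma isR_comm {a : Quaternion ℝ} (ha : isR a) (b : Quaternion ℝ) : a * b = b * a := by
  obtain ⟨h1, h2, h3⟩ := ha
  ext <;> simp [Quaternion.re_mul, Quaternion.imI_mul, Quaternion.imJ_mul,
    Quaternion.imK_mul, h1, h2, h3] <;> ring

lemma isR_mul {a b : Quaternion ℝ} (ha : isR a) (hb : isR b) : isR (a * b) := by
  obtain ⟨h1, h2, h3⟩ := ha; obtain ⟨g1, g2, g3⟩ := hb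
  refine ⟨?_, ?_, ?_⟩ <;>
    simp [Quaternion.imI_mul, Quaternion.imJ_mul, Quaternion.imK_mul, h1, h2, h3, g1, g2, g3]

lemma isR_eq_zero {a : Quaternion ℝ} (ha : isR a) (h0 : a.re = 0) : a = 0 := by
  obtain ⟨h1, h2, h3⟩ := ha
  ext <;> simp [h0, h1, h2, h3, Quaternion.re_zero, Quaternion.imI_zero, Quaternion.imJ_zero,
    Quaternion.imK_zero]

/-! ### Closure properties of `PSet` and `QSet` -/

lemma P_one : (1 : Polynomial (Quaternion ℝ)) ∈ PSet := by
  intro n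
  rcases eq_or_ne n 0 with rfl | hn
  · simp [coeff_one, ok, Quaternion.imJ_one, Quaternion.imK_one]
  · simp [coeff_one, hn, ok_zero]

lemma P_zero : (0 : Polynomial (Quaternion ℝ)) ∈ PSet := fun n => by
  simp [ok_zero]

lemma P_neg {p : Polynomial (Quaternion ℝ)} (hp : p ∈ PSet) : -p ∈ PSet := fun n => by
  rw [coeff_neg]; exact ok_neg (hp n)

lemma P_add {p q : Polynomial (Quaternion ℝ)} (hp : p ∈ PSet) (hq : q ∈ PSet) :
    p + q ∈ PSet := fun n => by
  rw [coeff_add]; exact ok_add (hp n) (hq n)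

lemma P_mul {p q : Polynomial (Quaternion ℝ)} (hp : p ∈ PSet) (hq : q ∈ PSet) :
    p * q ∈ PSet := by
  intro n
  rw [← mem_okGrp, coeff_mul]
  refine AddSubgroup.sum_mem _ fun x hx => ?_
  have hx' := Finset.HasAntidiagonal.mem_antidiagonal.mp hx
  rw [mem_okGrp, ← hx']
  exact ok_mul (hp x.1) (hq x.2)

lemma Q_one : (1 : Polynomial (Quaternion ℝ)) ∈ QSet := by
  intro n
  rcases eq_or_ne n 0 with rfl | hn
  · simp [coeff_one, isR, Quaternion.imI_one, Quaternion.imJ_one, Quaternion.imK_one]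
  · simp [coeff_one, hn, isR, Quaternion.imI_zero, Quaternion.imJ_zero, Quaternion.imK_zero]

lemma Q_subset_P : QSet ⊆ PSet := by
  intro q hq n
  rcases Nat.even_or_odd n with hn | hn
  · obtain ⟨⟨_, h2, h3⟩, _⟩ := hq n
    simp [ok, hn, h2, h3]
  · rw [(hq n).2 (Nat.not_even_iff_odd.2 hn)]
    exact ok_zero n

lemma Q_mul {p q : Polynomial (Quaternion ℝ)} (hp : p ∈ QSet) (hq : q ∈ QSet) :
    p * q ∈ QSet := by
  intro n
  constructor
  · rw [coeff_mul]
    have : ∀ x ∈ antidiagonal n, isR (p.coeff x.1 * q.coeff x.2) :=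
      fun x _ => isR_mul (hp x.1).1 (hq x.2).1
    -- isR as an additive subgroup property, do sum by induction
    classical
    refine Finset.sum_induction _ isR ?_ ?_ this
    · intro a b ha hb
      exact ⟨by simp [Quaternion.imI_add, ha.1, hb.1], by simp [Quaternion.imJ_add, ha.2.1, hb.2.1],
        by simp [Quaternion.imK_add, ha.2.2, hb.2.2]⟩
    · exact ⟨rfl, rfl, rfl⟩
  · intro hn
    rw [coeff_mul]
    refine Finset.sum_eq_zero fun x hx => ?_
    have hx' := Finset.HasAntidiagonal.mem_antidiagonal.mp hx
    rcases Nat.even_or_odd x.1 with h1 | h1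
    · have : ¬ Even x.2 := by
        intro h2; exact hn (hx' ▸ h1.add h2)
      rw [(hq x.2).2 this, mul_zero]
    · rw [(hp x.1).2 (Nat.not_even_iff_odd.2 h1), zero_mul]

lemma Q_comm {q : Polynomial (Quaternion ℝ)} (hq : q ∈ QSet)
    (p : Polynomial (Quaternion ℝ)) : q * p = p * q := by
  refine Polynomial.ext fun n => ?_
  rw [coeff_mul, coeff_mul,
    ← Finset.Nat.sum_antidiagonal_swap (f := fun x : ℕ × ℕ => p.coeff x.1 * q.coeff x.2)]
  exact Finset.sum_congr rfl fun x _ => by simp [isR_comm (hq x.1).1]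

/-! ### Coefficientwise star -/

def pstar (p : Polynomial (Quaternion ℝ)) : Polynomial (Quaternion ℝ) :=
  ⟨⟨Finsupp.mapRange star (star_zero _) p.toFinsupp.coeff⟩⟩

lemma coeff_pstar (p : Polynomial (Quaternion ℝ)) (n : ℕ) :
    (pstar p).coeff n = star (p.coeff n) := by
  rcases p with ⟨f⟩
  simp [pstar, Polynomial.coeff]

lemma pstar_pstar (p : Polynomial (Quaternion ℝ)) : pstar (pstar p) = p := by
  refine Polynomial.ext fun n => ?_
  rw [coeff_pstar, coeff_pstar, star_star]

lemma pstar_ne_zero {p : Polynomial (Quaternion ℝ)} (hp : p ≠ 0) : pstar p ≠ 0 := by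
  intro h
  apply hp
  refine Polynomial.ext fun n => ?_
  have := congrArg (fun r => Polynomial.coeff r n) h
  simp only [coeff_pstar, coeff_zero] at this
  simpa using star_eq_zero.1 this

lemma pstar_mul (p q : Polynomial (Quaternion ℝ)) :
    pstar (p * q) = pstar q * pstar p := by
  refine Polynomial.ext fun n => ?_
  rw [coeff_pstar, coeff_mul, coeff_mul, star_sum,
    ← Finset.Nat.sum_antidiagonal_swap
      (f := fun x : ℕ × ℕ => (pstar q).coeff x.1 * (pstar p).coeff x.2)]
  refine Finset.sum_congr rfl fun x _ => ?_
  simp [coeff_pstar, star_mul]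

lemma P_pstar {p : Polynomial (Quaternion ℝ)} (hp : p ∈ PSet) : pstar p ∈ PSet := by
  intro n
  rw [coeff_pstar]
  have := hp n
  unfold ok at *
  split at this <;> split <;> simp_all

lemma mul_pstar_mem_Q {p : Polynomial (Quaternion ℝ)} (hp : p ∈ PSet) :
    p * pstar p ∈ QSet := by
  have hP : p * pstar p ∈ PSet := P_mul hp (P_pstar hp)
  have hstar : pstar (p * pstar p) = p * pstar p := by
    rw [pstar_mul, pstar_pstar]
  intro n
  have hco : star ((p * pstar p).coeff n) = (p * pstar p).coeff n := by
    rw [← coeff_pstar, hstar]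
  set a := (p * pstar p).coeff n with ha
  have h1 : a.imI = 0 := by
    have := congrArg QuaternionAlgebra.imI hco
    simp only [Quaternion.imI_star] at this
    linarith
  have h2 : a.imJ = 0 := by
    have := congrArg QuaternionAlgebra.imJ hco
    simp only [Quaternion.imJ_star] at this
    linarith
  have h3 : a.imK = 0 := by
    have := congrArg QuaternionAlgebra.imK hco
    simp only [Quaternion.imK_star] at this
    linarith
  refine ⟨⟨h1, h2, h3⟩, fun hn => ?_⟩
  have := hP n
  unfold ok at this
  rw [if_neg hn] at this
  exact isR_eq_zero ⟨h1, h2, h3⟩ this.1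



lemma kq_ne (κ : Polynomial (Quaternion ℝ) →+* M) (hinj : Function.Injective κ)
    {q : Polynomial (Quaternion ℝ)} (hq : q ≠ 0) : κ q ≠ 0 :=
  fun h => hq (hinj (by rw [h, map_zero]))

lemma central (κ : Polynomial (Quaternion ℝ) →+* M)
    (hquot : ∀ z : M, ∃ p q : Polynomial (Quaternion ℝ), q ≠ 0 ∧ z = κ p * (κ q)⁻¹)
    {q : Polynomial (Quaternion ℝ)} (hq : q ∈ QSet) (z : M) : Commute (κ q) z := by
  obtain ⟨p', q', hq', rfl⟩ := hquot z
  have h1 : Commute (κ q) (κ p') := by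
    show κ q * κ p' = κ p' * κ q
    rw [← map_mul, ← map_mul, Q_comm hq]
  have h2 : Commute (κ q) (κ q')⁻¹ := by
    refine Commute.inv_right₀ ?_
    show κ q * κ q' = κ q' * κ q
    rw [← map_mul, ← map_mul, Q_comm hq]
  exact h1.mul_right h2

lemma t1 {a d e : M} (hd : d ≠ 0) : a * d * (d⁻¹ * e) = a * e := by
  rw [mul_assoc, ← mul_assoc d, mul_inv_cancel₀ hd, one_mul]

lemma t2 {c b d : M} (hb0 : b ≠ 0) (hb : ∀ z : M, b * z = z * b) :
    c * b * (d * b⁻¹) = c * d := by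
  rw [mul_assoc, hb (d * b⁻¹), mul_assoc d, inv_mul_cancel₀ hb0, mul_one]

lemma mul_aux {a b c d : M} (hb : ∀ z : M, b * z = z * b) :
    a * b * (c * d) = a * c * (d * b) := by
  rw [mul_assoc a b, hb (c * d), mul_assoc c d b, ← mul_assoc]

set_option maxHeartbeats 1000000 in
/-- The division subring `{κ p * (κ q)⁻¹ : p ∈ P, q ∈ Q}` of `M`. -/
def Dsub (κ : Polynomial (Quaternion ℝ) →+* M) (hinj : Function.Injective κ)
    (hquot : ∀ z : M, ∃ p q : Polynomial (Quaternion ℝ), q ≠ 0 ∧ z = κ p * (κ q)⁻¹) :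
    Subfield M where
  carrier := {z | ∃ p ∈ PSet, ∃ q ∈ QSet, q ≠ 0 ∧ z = κ p * (κ q)⁻¹}
  one_mem' := ⟨1, P_one, 1, Q_one, one_ne_zero, by simp⟩
  zero_mem' := ⟨0, P_zero, 1, Q_one, one_ne_zero, by simp⟩
  neg_mem' := by
    rintro z ⟨p, hp, q, hq, h0, rfl⟩
    exact ⟨-p, P_neg hp, q, hq, h0, by rw [κ.map_neg, neg_mul]⟩
  mul_mem' := by
    rintro z w ⟨p1, hp1, q1, hq1, h10, rfl⟩ ⟨p2, hp2, q2, hq2, h20, rfl⟩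
    refine ⟨p1 * p2, P_mul hp1 hp2, q1 * q2, Q_mul hq1 hq2, mul_ne_zero h10 h20, ?_⟩
    have hb : ∀ z : M, (κ q1)⁻¹ * z = z * (κ q1)⁻¹ :=
      fun z => ((central κ hquot hq1 z).inv_left₀).eq
    rw [map_mul, map_mul, mul_inv_rev, mul_aux hb]
  add_mem' := by
    rintro z w ⟨p1, hp1, q1, hq1, h10, rfl⟩ ⟨p2, hp2, q2, hq2, h20, rfl⟩
    refine ⟨p1 * q2 + p2 * q1,
      P_add (P_mul hp1 (Q_subset_P hq2)) (P_mul hp2 (Q_subset_P hq1)),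
      q1 * q2, Q_mul hq1 hq2, mul_ne_zero h10 h20, ?_⟩
    have hb : ∀ z : M, κ q1 * z = z * κ q1 := fun z => (central κ hquot hq1 z).eq
    rw [RingHom.map_add, map_mul, map_mul, map_mul, add_mul, mul_inv_rev,
      t1 (kq_ne κ hinj h20), t2 (kq_ne κ hinj h10) hb]
  inv_mem' := by
    rintro z ⟨p, hp, q, hq, h0, rfl⟩
    by_cases hz : κ p * (κ q)⁻¹ = 0
    · rw [hz, inv_zero]
      exact ⟨0, P_zero, 1, Q_one, one_ne_zero, by simp⟩
    · have hp0 : p ≠ 0 := by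
        rintro rfl
        simp at hz
      refine ⟨q * pstar p, P_mul (Q_subset_P hq) (P_pstar hp),
        p * pstar p, mul_pstar_mem_Q hp,
        mul_ne_zero hp0 (pstar_ne_zero hp0), ?_⟩
      have hS : κ (pstar p) ≠ 0 := kq_ne κ hinj (pstar_ne_zero hp0)
      rw [mul_inv_rev, inv_inv, map_mul, map_mul, mul_inv_rev, t1 hS]

lemma phi_le (κ : Polynomial (Quaternion ℝ) →+* M) (hinj : Function.Injective κ)
    (hquot : ∀ z : M, ∃ p q : Polynomial (Quaternion ℝ), q ≠ 0 ∧ z = κ p * (κ q)⁻¹) :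
    phiImage κ ≤ Dsub κ hinj hquot := by
  refine Subfield.closure_le.mpr ?_
  rintro z (⟨a, rfl⟩ | rfl)
  · refine ⟨Polynomial.C (qc a), ?_, 1, Q_one, one_ne_zero, by simp⟩
    intro n
    rw [Polynomial.coeff_C]
    by_cases h : n = 0
    · subst h
      simp [ok, qc]
    · simp [h, ok_zero]
  · refine ⟨Polynomial.C qj * Polynomial.X, ?_, 1, Q_one, one_ne_zero, by simp [jXElem]⟩
    intro n
    rw [Polynomial.coeff_C_mul_X]
    by_cases h : n = 1
    · subst h
      simp [ok, qj, Nat.even_iff]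
    · simp [h, ok_zero]

lemma j_not_mem (κ : Polynomial (Quaternion ℝ) →+* M) (hinj : Function.Injective κ)
    (hquot : ∀ z : M, ∃ p q : Polynomial (Quaternion ℝ), q ≠ 0 ∧ z = κ p * (κ q)⁻¹) :
    jElem κ ∉ Dsub κ hinj hquot := by
  rintro ⟨p, hp, q, hq, h0, heq⟩
  have h2 : κ (Polynomial.C qj * q) = κ p := by
    rw [map_mul]
    show jElem κ * κ q = κ p
    rw [heq, inv_mul_cancel_right₀ (kq_ne κ hinj h0)]
  have h3 : Polynomial.C qj * q = p := hinj h2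
  apply h0
  refine Polynomial.ext fun n => ?_
  rw [Polynomial.coeff_zero]
  rcases Nat.even_or_odd n with hn | hn
  · have hok := hp n
    rw [← h3, Polynomial.coeff_C_mul] at hok
    unfold ok at hok
    rw [if_pos hn] at hok
    have hiso := (hq n).1
    have hkey : (qj * q.coeff n).imJ = (q.coeff n).re := by
      rw [Quaternion.imJ_mul]; simp [qj, hiso.1]
    exact isR_eq_zero hiso (by rw [← hkey]; exact hok.1)
  · exact (hq n).2 (Nat.not_even_iff_odd.2 hn)



end Swap14

end Swap14aux

/-
STATEMENT 14 (Lemma `swap`(2)).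
The element `j` of `ℍ(X)` does not belong to `φ(ℂ(T, σ))` (the division subring
`phiImage κ` of `M = ℍ(X)` generated by `ℂ` and `jX`).  Consequently, for every
division ring `L` with `ℂ ⊆ L ⊆ ℂ(T, σ)` (whose image `φ(L)` is a division subring of
`M` with `ℂ ⊆ φ(L) ⊆ phiImage κ`), the left `φ(L)`-vector space `φ(L) + φ(L)j` has
dimension 2 over `φ(L)`: since `{1, j}` spans it by definition, this says that the
representation `x + y·j` (`x, y ∈ φ(L)`) of its elements is unique.
-/
theorem j_not_in_phi_image_and_dim_two
    (κ : Polynomial (Quaternion ℝ) →+* M) (hinj : Function.Injective κ)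
    (hquot : ∀ z : M, ∃ p q : Polynomial (Quaternion ℝ), q ≠ 0 ∧ z = κ p * (κ q)⁻¹) :
    jElem κ ∉ phiImage κ ∧
    ∀ L : Subfield M, complexSet κ ⊆ (L : Set M) → (L : Set M) ⊆ phiImage κ →
      ∀ x ∈ L, ∀ y ∈ L, ∀ x' ∈ L, ∀ y' ∈ L,
        x + y * jElem κ = x' + y' * jElem κ → x = x' ∧ y = y' := by
  have hnot : jElem κ ∉ phiImage κ :=
    fun h => Swap14.j_not_mem κ hinj hquot (Swap14.phi_le κ hinj hquot h)
  refine ⟨hnot, ?_⟩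
  intro L hCL hLphi x hx y hy x' hx' y' hy' heq
  have hyy : y = y' := by
    by_contra hne
    apply hnot
    have h1 : (y - y') * jElem κ = x' - x := by
      rw [sub_mul, sub_eq_sub_iff_add_eq_add, add_comm]
      exact heq
    have hy0 : y - y' ≠ 0 := sub_ne_zero.2 hne
    have hmem : (y - y')⁻¹ * (x' - x) ∈ phiImage κ := by
      have m1 : y - y' ∈ phiImage κ := sub_mem (hLphi hy) (hLphi hy')
      have m2 : x' - x ∈ phiImage κ := sub_mem (hLphi hx') (hLphi hx)
      exact mul_mem (inv_mem m1) m2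
    have hj : jElem κ = (y - y')⁻¹ * (x' - x) := by
      rw [← h1, inv_mul_cancel_left₀ hy0]
    rw [hj]
    exact hmem
  subst hyy
  exact ⟨add_right_cancel heq, rfl⟩

end
end

section
/- Let L be a division ring with ℂ ⊆ L ⊆ ℂ(T, σ) such that φ(L) is σ-invariant, i.e., σ(φ(L)) = φ(L). Then φ(L) + φ(L)j is a division subring of ℍ(X). -/
noncomputable section

variable {M : Type*} [DivisionRing M]

/-
STATEMENT 15 (Lemma `swap`(3)).
Let `L` be a division ring with `ℂ ⊆ L ⊆ ℂ(T, σ)` such that `φ(L)` is `σ`-invariant,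
i.e. `σ(φ(L)) = φ(L)`.  Then `φ(L) + φ(L)j` is a division subring of `ℍ(X)`.  Here
`φ(L)` is formalized as a division subring `L` of `M = ℍ(X)` with
`ℂ ⊆ L ⊆ phiImage κ = φ(ℂ(T, σ))`, and `σ` on `ℍ(X)` is any ring homomorphism `s`
extending the coefficientwise conjugation of `ℍ[X]`.
-/

lemma qsigma_mul_qj' (a : Quaternion ℝ) : qsigma a * qj = qj * a := by
  ext <;> simp [Quaternion.re_mul, Quaternion.imI_mul, Quaternion.imJ_mul, Quaternion.imK_mul] <;> simp [qj, qsigma]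

lemma qj_mul_qj' : qj * qj = -1 := by
  ext <;> simp [Quaternion.re_mul, Quaternion.imI_mul, Quaternion.imJ_mul, Quaternion.imK_mul, Quaternion.re_one, Quaternion.imI_one, Quaternion.imJ_one, Quaternion.imK_one] <;> simp [qj]

lemma qsigma_zero' : qsigma 0 = 0 := by ext <;> simp [qsigma, Quaternion.imI_zero, Quaternion.imK_zero]

lemma qsigma_add' (a b : Quaternion ℝ) : qsigma (a + b) = qsigma a + qsigma b := by
  ext <;> simp [Quaternion.re_add, Quaternion.imI_add, Quaternion.imJ_add, Quaternion.imK_add] <;> simp [qsigma] <;> ring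

open Polynomial in
lemma sigma_poly_mul_Cj' (p : Polynomial (Quaternion ℝ)) :
    (p.sum fun n q => C (qsigma q) * X ^ n) * C qj = C qj * p := by
  induction p using Polynomial.induction_on' with
  | add p q hp hq =>
    rw [Polynomial.sum_add_index p q _ (fun n => by simp [qsigma_zero'])
      (fun n a b => by rw [qsigma_add', Polynomial.C_add, add_mul]), add_mul, hp, hq, mul_add]
  | monomial n a =>
    rw [Polynomial.sum_monomial_index a _ (by simp [qsigma_zero'])]
    calc C (qsigma a) * X ^ n * C qj
        = C (qsigma a) * C qj * X ^ n := by rw [mul_assoc, mul_assoc, Polynomial.X_pow_mul]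
      _ = C (qj * a) * X ^ n := by rw [← Polynomial.C_mul, qsigma_mul_qj', Polynomial.C_mul]
      _ = C qj * (C a * X ^ n) := by rw [Polynomial.C_mul, mul_assoc]
      _ = C qj * monomial n a := by rw [Polynomial.C_mul_X_pow_eq_monomial]

theorem phiL_plus_phiL_j_is_division_subring
    (κ : Polynomial (Quaternion ℝ) →+* M) (hinj : Function.Injective κ)
    (hquot : ∀ z : M, ∃ p q : Polynomial (Quaternion ℝ), q ≠ 0 ∧ z = κ p * (κ q)⁻¹)
    (L : Subfield M)
    (hCL : complexSet κ ⊆ (L : Set M)) (hLD : (L : Set M) ⊆ phiImage κ)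
    (s : M →+* M) (hs : IsSigmaExtension κ s)
    (hsL : s '' (L : Set M) = (L : Set M)) :
    ∃ E : Subfield M,
      (E : Set M) = {z : M | ∃ x ∈ L, ∃ y ∈ L, z = x + y * jElem κ} := by
  set j : M := jElem κ with hjdef
  have hjj : j * j = -1 := by
    rw [hjdef]
    show κ (Polynomial.C qj) * κ (Polynomial.C qj) = -1
    rw [← map_mul, ← Polynomial.C_mul, qj_mul_qj', Polynomial.C_neg, Polynomial.C_1,
      RingHom.map_neg, RingHom.map_one]
  have step1 : ∀ p : Polynomial (Quaternion ℝ), s (κ p) * j = j * κ p := by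
    intro p
    rw [hs p, hjdef]
    show κ _ * κ (Polynomial.C qj) = κ (Polynomial.C qj) * κ p
    rw [← map_mul, ← map_mul, sigma_poly_mul_Cj']
  have hswap : ∀ z : M, s z * j = j * z := by
    intro z
    obtain ⟨p, q, hq, rfl⟩ := hquot z
    have hq0 : κ q ≠ 0 := fun h => hq (hinj (h.trans (map_zero κ).symm))
    have hsq0 : s (κ q) ≠ 0 := fun h => hq0 (s.injective (by simpa using h))
    have e1 : s (κ q) * j = j * κ q := step1 q
    have e2 : (s (κ q))⁻¹ * j = j * (κ q)⁻¹ := by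
      have h2 := congrArg (fun t => (s (κ q))⁻¹ * t * (κ q)⁻¹) e1
      simpa [mul_assoc, inv_mul_cancel_left₀ hsq0, mul_inv_cancel_right₀ hq0,
        inv_mul_cancel₀ hsq0, mul_inv_cancel₀ hq0] using h2.symm
    rw [map_mul, map_inv₀, mul_assoc, e2, ← mul_assoc, step1 p, mul_assoc]
  have hjz : ∀ z : M, j * z = s z * j := fun z => (hswap z).symm
  have hsmem : ∀ x ∈ L, s x ∈ L := by
    intro x hx
    have h1 : s x ∈ ⇑s '' (L : Set M) := Set.mem_image_of_mem s hx
    rw [hsL] at h1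
    exact h1
  have hsur : ∀ x ∈ L, ∃ y ∈ L, s y = x := by
    intro x hx
    have hx' : x ∈ ⇑s '' (L : Set M) := by rw [hsL]; exact hx
    obtain ⟨y, hy, hyx⟩ := hx'
    exact ⟨y, hy, hyx⟩
  have hmul : ∀ x y u v : M, (x + y * j) * (u + v * j)
      = (x * u - y * s v) + (x * v + y * s u) * j := by
    intro x y u v
    rw [add_mul, mul_add, mul_add, mul_assoc y j u, hjz u, mul_assoc y j (v * j),
      ← mul_assoc j v j, hjz v, mul_assoc (s v) j j, hjj]
    noncomm_ring
  refine ⟨{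
    carrier := {z : M | ∃ x ∈ L, ∃ y ∈ L, z = x + y * j}
    zero_mem' := ⟨0, L.zero_mem, 0, L.zero_mem, by simp⟩
    one_mem' := ⟨1, L.one_mem, 0, L.zero_mem, by simp⟩
    add_mem' := by
      rintro a b ⟨x, hx, y, hy, rfl⟩ ⟨u, hu, v, hv, rfl⟩
      exact ⟨x + u, L.add_mem hx hu, y + v, L.add_mem hy hv, by rw [add_mul]; abel⟩
    neg_mem' := by
      rintro a ⟨x, hx, y, hy, rfl⟩
      exact ⟨-x, L.neg_mem hx, -y, L.neg_mem hy, by rw [neg_mul]; abel⟩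
    mul_mem' := by
      rintro a b ⟨x, hx, y, hy, rfl⟩ ⟨u, hu, v, hv, rfl⟩
      exact ⟨x * u - y * s v, L.sub_mem (L.mul_mem hx hu) (L.mul_mem hy (hsmem v hv)),
        x * v + y * s u, L.add_mem (L.mul_mem hx hv) (L.mul_mem hy (hsmem u hu)),
        hmul x y u v⟩
    inv_mem' := by
      rintro a ⟨x, hx, y, hy, rfl⟩
      by_cases hz : x + y * j = 0
      · exact ⟨0, L.zero_mem, 0, L.zero_mem, by simp [hz]⟩
      by_cases hy0 : y = 0
      · exact ⟨x⁻¹, L.inv_mem hx, 0, L.zero_mem, by simp [hy0]⟩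
      have hyinv : y⁻¹ ∈ L := L.inv_mem hy
      set c : M := y⁻¹ * x with hc
      have hcL : c ∈ L := L.mul_mem hyinv hx
      have hzfac : x + y * j = y * (c + j) := by
        rw [hc, mul_add, ← mul_assoc, mul_inv_cancel₀ hy0, one_mul]
      obtain ⟨d, hd, hds⟩ := hsur (-c) (L.neg_mem hcL)
      have hkey : (c + j) * (d + j) = c * d - 1 := by
        have h3 := hmul c 1 d 1
        simpa [hds] using h3
      have hcj0 : c + j ≠ 0 := by
        intro h
        exact hz (by rw [hzfac, h, mul_zero])
      by_cases ha : c * d - 1 = 0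
      · have hdj : d + j = 0 := by
          rcases mul_eq_zero.mp (hkey.trans ha) with h | h
          · exact absurd h hcj0
          · exact h
        have hjL : j ∈ L := by
          rw [(neg_eq_of_add_eq_zero_right hdj).symm]
          exact L.neg_mem hd
        have hzL : x + y * j ∈ L := L.add_mem hx (L.mul_mem hy hjL)
        exact ⟨(x + y * j)⁻¹, L.inv_mem hzL, 0, L.zero_mem, by simp⟩
      · set a : M := c * d - 1 with hadef
        have haL : a ∈ L := L.sub_mem (L.mul_mem hcL hd) L.one_mem
        have hainv : a⁻¹ ∈ L := L.inv_mem haL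
        have hcjinv : (c + j)⁻¹ = (d + j) * a⁻¹ := by
          refine inv_eq_of_mul_eq_one_right ?_
          rw [← mul_assoc, hkey, mul_inv_cancel₀ ha]
        have hinv_eq : (x + y * j)⁻¹ = (d + j) * a⁻¹ * y⁻¹ := by
          rw [hzfac, mul_inv_rev, hcjinv]
        refine ⟨d * (a⁻¹ * y⁻¹), L.mul_mem hd (L.mul_mem hainv hyinv),
          s (a⁻¹ * y⁻¹), hsmem _ (L.mul_mem hainv hyinv), ?_⟩
        rw [hinv_eq, add_mul, add_mul, mul_assoc d a⁻¹ y⁻¹, mul_assoc j a⁻¹ y⁻¹,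
          hjz (a⁻¹ * y⁻¹)] }, rfl⟩


end
end

section
/- For i ∈ {1, 2}, let Lᵢ be a division ring with ℂ ⊆ Lᵢ ⊆ ℂ(T, σ). If φ(L₁) ⊆ φ(L₂) and φ(L₂) + φ(L₂)j ⊆ φ(L₁) + φ(L₁)j, then L₁ = L₂. -/
noncomputable section

variable {M : Type*} [DivisionRing M]

namespace SwapAux
set_option maxHeartbeats 1000000
set_option synthInstance.maxHeartbeats 100000

open Polynomial

def qi : Quaternion ℝ := ⟨0, 1, 0, 0⟩

lemma qi_mul_qi : qi * qi = -1 := by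
  apply Quaternion.ext <;> simp [Quaternion.re_mul, Quaternion.imI_mul, Quaternion.imJ_mul, Quaternion.imK_mul, Quaternion.re_one, Quaternion.imI_one, Quaternion.imJ_one, Quaternion.imK_one] <;> simp [qi]

/-- Conjugation by `i` on the quaternions. -/
def cI : Quaternion ℝ →+* Quaternion ℝ where
  toFun q := -(qi * q * qi)
  map_one' := by show -(qi * 1 * qi) = 1; rw [mul_one, qi_mul_qi, neg_neg]
  map_mul' a b := by
    show -(qi * (a * b) * qi) = -(qi * a * qi) * -(qi * b * qi)
    have : qi * (a * b) * qi = (qi * a * qi) * -(qi * b * qi) := by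
      rw [show (qi * a * qi) * -(qi * b * qi) = -(qi * a * (qi * qi) * b * qi) by
        noncomm_ring, qi_mul_qi]
      noncomm_ring
    rw [show -(qi*(a*b)*qi) = -(qi*a*qi * -(qi*b*qi)) from congrArg Neg.neg this]; noncomm_ring
  map_zero' := by simp
  map_add' a b := by show -(qi * (a + b) * qi) = -(qi * a * qi) + -(qi * b * qi); noncomm_ring

lemma cI_cI (a : Quaternion ℝ) : cI (cI a) = a := by
  show -(qi * -(qi * a * qi) * qi) = a
  rw [show -(qi * -(qi * a * qi) * qi) = (qi * qi) * a * (qi * qi) by noncomm_ring,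
    qi_mul_qi]
  noncomm_ring

/-- The automorphism of `ℍ[X]` given by conjugation by `i` on coefficients together
with `X ↦ -X`. It fixes `ℂ` and `jX` pointwise but sends `j` to `-j`. -/
def beta : Polynomial (Quaternion ℝ) →+* Polynomial (Quaternion ℝ) :=
  eval₂RingHom' (C.comp cI) (-X) fun a => ((commute_X (C (cI a))).symm).neg_right

lemma beta_C (a : Quaternion ℝ) : beta (C a) = C (cI a) := eval₂_C _ _

lemma beta_X : beta X = -X := eval₂_X _ _

lemma beta_beta (p : Polynomial (Quaternion ℝ)) : beta (beta p) = p := by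
  induction p using Polynomial.induction_on' with
  | add f g hf hg => rw [beta.map_add, beta.map_add, hf, hg]
  | monomial n a =>
    rw [← C_mul_X_pow_eq_monomial]
    rw [beta.map_mul, beta.map_mul, beta.map_pow, beta.map_pow, beta_C, beta_C, beta_X, cI_cI, beta.map_neg, beta_X, neg_neg]

lemma beta_inj : Function.Injective beta :=
  Function.LeftInverse.injective beta_beta

section

variable (κ : Polynomial (Quaternion ℝ) →+* M) (hinj : Function.Injective κ)
  (hquot : ∀ z : M, ∃ p q : Polynomial (Quaternion ℝ), q ≠ 0 ∧ z = κ p * (κ q)⁻¹)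

include hinj

lemma kne {x : Polynomial (Quaternion ℝ)} (hx : x ≠ 0) : κ x ≠ 0 := by
  intro h
  exact hx (hinj (h.trans (map_zero κ).symm))

/-- Cancelling a common right factor in a right fraction. -/
lemma frac_cancel (p q r : Polynomial (Quaternion ℝ)) (hr : r ≠ 0) :
    κ (p * r) * (κ (q * r))⁻¹ = κ p * (κ q)⁻¹ := by
  rw [map_mul, map_mul, mul_inv_rev, mul_assoc, ← mul_assoc (κ r),
    mul_inv_cancel₀ (kne κ hinj hr), one_mul]

include hquot

/-- The right Ore condition, derived from `hquot`. -/
lemma ore (u v : Polynomial (Quaternion ℝ)) (hu : u ≠ 0) :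
    ∃ a b, b ≠ 0 ∧ v * b = u * a ∧ (κ u)⁻¹ * κ v = κ a * (κ b)⁻¹ := by
  obtain ⟨a, b, hb, h⟩ := hquot ((κ u)⁻¹ * κ v)
  refine ⟨a, b, hb, ?_, h⟩
  apply hinj
  rw [map_mul, map_mul]
  have h2 : (κ u)⁻¹ * κ v * κ b = κ a * (κ b)⁻¹ * κ b := by rw [h]
  rw [inv_mul_cancel_right₀ (kne κ hinj hb)] at h2
  calc κ v * κ b = κ u * ((κ u)⁻¹ * (κ v * κ b)) := by
        rw [mul_inv_cancel_left₀ (kne κ hinj hu)]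
    _ = κ u * κ a := by rw [← mul_assoc ((κ u)⁻¹) (κ v) (κ b), h2]

/-- Independence of the representative for the extension of `beta`. -/
lemma g_wd {p₁ q₁ p₂ q₂ : Polynomial (Quaternion ℝ)} (h₁ : q₁ ≠ 0) (h₂ : q₂ ≠ 0)
    (h : κ p₁ * (κ q₁)⁻¹ = κ p₂ * (κ q₂)⁻¹) :
    κ (beta p₁) * (κ (beta q₁))⁻¹ = κ (beta p₂) * (κ (beta q₂))⁻¹ := by
  obtain ⟨a, b, hb, hq, hK⟩ := ore κ hinj hquot q₁ q₂ h₁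
  have ha : a ≠ 0 := by
    rintro rfl
    apply kne κ hinj h₂
    rw [map_zero, zero_mul] at hK
    calc κ q₂ = κ q₁ * ((κ q₁)⁻¹ * κ q₂) := by
          rw [mul_inv_cancel_left₀ (kne κ hinj h₁)]
      _ = 0 := by rw [hK, mul_zero]
  have hqa : q₁ * a = q₂ * b := hq.symm
  have hpa : p₁ * a = p₂ * b := by
    apply hinj; rw [map_mul, map_mul]
    calc κ p₁ * κ a
        = (κ p₁ * (κ q₁)⁻¹) * (κ q₁ * κ a) := by
          rw [mul_assoc, inv_mul_cancel_left₀ (kne κ hinj h₁)]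
      _ = (κ p₂ * (κ q₂)⁻¹) * (κ q₂ * κ b) := by
          rw [h, ← κ.map_mul, ← κ.map_mul, hqa]
      _ = κ p₂ * κ b := by
          rw [mul_assoc, inv_mul_cancel_left₀ (kne κ hinj h₂)]
  have hba : beta a ≠ 0 := fun h0 => ha (beta_inj (h0.trans beta.map_zero.symm))
  have hbb : beta b ≠ 0 := fun h0 => hb (beta_inj (h0.trans beta.map_zero.symm))
  calc κ (beta p₁) * (κ (beta q₁))⁻¹
      = κ (beta p₁ * beta a) * (κ (beta q₁ * beta a))⁻¹ :=
        (frac_cancel κ hinj _ _ _ hba).symm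
    _ = κ (beta (p₁ * a)) * (κ (beta (q₁ * a)))⁻¹ := by rw [beta.map_mul, beta.map_mul]
    _ = κ (beta (p₂ * b)) * (κ (beta (q₂ * b)))⁻¹ := by rw [hpa, hqa]
    _ = κ (beta p₂ * beta b) * (κ (beta q₂ * beta b))⁻¹ := by rw [beta.map_mul, beta.map_mul]
    _ = κ (beta p₂) * (κ (beta q₂))⁻¹ := frac_cancel κ hinj _ _ _ hbb

/-- The extension of `beta` to a ring endomorphism of `M`. -/
theorem exists_G : ∃ G : M →+* M, ∀ p, G (κ p) = κ (beta p) := by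
  classical
  choose P Q hQ hz using hquot
  set gf : M → M := fun z => κ (beta (P z)) * (κ (beta (Q z)))⁻¹ with hgf
  have gspec : ∀ (z : M) p q, q ≠ 0 → z = κ p * (κ q)⁻¹ →
      gf z = κ (beta p) * (κ (beta q))⁻¹ := by
    intro z p q hq h
    exact g_wd κ hinj (fun w => ⟨P w, Q w, hQ w, hz w⟩) (hQ z) hq ((hz z).symm.trans h)
  have hquot' : ∀ z : M, ∃ p q : Polynomial (Quaternion ℝ), q ≠ 0 ∧ z = κ p * (κ q)⁻¹ :=
    fun w => ⟨P w, Q w, hQ w, hz w⟩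
  have gκ : ∀ p, gf (κ p) = κ (beta p) := by
    intro p
    rw [gspec (κ p) p 1 one_ne_zero (by rw [κ.map_one, inv_one, mul_one]), beta.map_one,
      κ.map_one, inv_one, mul_one]
  have gone : gf 1 = 1 := by
    have := gκ 1
    rwa [κ.map_one, beta.map_one, κ.map_one] at this
  have gzero : gf 0 = 0 := by
    have := gκ 0
    rwa [κ.map_zero, beta.map_zero, κ.map_zero] at this
  have key : ∀ z₁ z₂ : M, ∃ p₁ p₂ q : Polynomial (Quaternion ℝ), q ≠ 0 ∧
      z₁ = κ p₁ * (κ q)⁻¹ ∧ z₂ = κ p₂ * (κ q)⁻¹ ∧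
      gf z₁ = κ (beta p₁) * (κ (beta q))⁻¹ ∧ gf z₂ = κ (beta p₂) * (κ (beta q))⁻¹ := by
    -- common denominator
    intro z₁ z₂
    obtain ⟨a, b, hb, hq, -⟩ := ore κ hinj hquot' (Q z₁) (Q z₂) (hQ z₁)
    have ha : a ≠ 0 := by
      rintro rfl
      rw [mul_zero] at hq
      exact mul_ne_zero (hQ z₂) hb hq
    have hz₁ : z₁ = κ (P z₁ * a) * (κ (Q z₁ * a))⁻¹ := by
      rw [frac_cancel κ hinj _ _ _ ha]; exact hz z₁
    have hz₂ : z₂ = κ (P z₂ * b) * (κ (Q z₁ * a))⁻¹ := by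
      rw [← hq, frac_cancel κ hinj _ _ _ hb]; exact hz z₂
    have hden : Q z₁ * a ≠ 0 := mul_ne_zero (hQ z₁) ha
    exact ⟨P z₁ * a, P z₂ * b, Q z₁ * a, hden, hz₁, hz₂,
      gspec z₁ _ _ hden hz₁, gspec z₂ _ _ hden hz₂⟩
  have gadd : ∀ z₁ z₂ : M, gf (z₁ + z₂) = gf z₁ + gf z₂ := by
    intro z₁ z₂
    obtain ⟨p₁, p₂, q, hq, h1, h2, g1, g2⟩ := key z₁ z₂
    have hsum : z₁ + z₂ = κ (p₁ + p₂) * (κ q)⁻¹ := by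
      rw [h1, h2, κ.map_add, add_mul]
    rw [gspec _ _ _ hq hsum, g1, g2, beta.map_add, κ.map_add, add_mul]
  have gmul : ∀ z₁ z₂ : M, gf (z₁ * z₂) = gf z₁ * gf z₂ := by
    intro z₁ z₂
    obtain ⟨p₁, q₁, hq₁, h1⟩ := hquot' z₁
    obtain ⟨p₂, q₂, hq₂, h2⟩ := hquot' z₂
    obtain ⟨a, b, hb, hpa, hK⟩ := ore κ hinj hquot' q₁ p₂ hq₁
    -- p₂ * b = q₁ * a
    have hmul : z₁ * z₂ = κ (p₁ * a) * (κ (q₂ * b))⁻¹ := by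
      calc z₁ * z₂ = κ p₁ * ((κ q₁)⁻¹ * κ p₂) * (κ q₂)⁻¹ := by
            rw [h1, h2]; noncomm_ring
        _ = κ p₁ * (κ a * (κ b)⁻¹) * (κ q₂)⁻¹ := by rw [hK]
        _ = κ (p₁ * a) * (κ (q₂ * b))⁻¹ := by
            rw [κ.map_mul, κ.map_mul, mul_inv_rev]; noncomm_ring
    have hK' : (κ (beta q₁))⁻¹ * κ (beta p₂) = κ (beta a) * (κ (beta b))⁻¹ := by
      have hbe : beta p₂ * beta b = beta q₁ * beta a := by
        rw [← beta.map_mul, ← beta.map_mul, hpa]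
      have hbb : κ (beta b) ≠ 0 :=
        kne κ hinj fun h0 => hb (beta_inj (h0.trans beta.map_zero.symm))
      have hbq : κ (beta q₁) ≠ 0 :=
        kne κ hinj fun h0 => hq₁ (beta_inj (h0.trans beta.map_zero.symm))
      have h2' : κ (beta p₂) * κ (beta b) = κ (beta q₁) * κ (beta a) := by
        rw [← κ.map_mul, ← κ.map_mul, hbe]
      calc (κ (beta q₁))⁻¹ * κ (beta p₂)
          = (κ (beta q₁))⁻¹ * (κ (beta p₂) * κ (beta b) * (κ (beta b))⁻¹) := by
            rw [mul_inv_cancel_right₀ hbb]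
        _ = (κ (beta q₁))⁻¹ * (κ (beta q₁) * κ (beta a) * (κ (beta b))⁻¹) := by rw [h2']
        _ = κ (beta a) * (κ (beta b))⁻¹ := by
            rw [← mul_assoc, ← mul_assoc, inv_mul_cancel₀ hbq, one_mul]
    rw [gspec _ _ _ (mul_ne_zero hq₂ hb) hmul, gspec _ _ _ hq₁ h1, gspec _ _ _ hq₂ h2]
    calc κ (beta (p₁ * a)) * (κ (beta (q₂ * b)))⁻¹
        = κ (beta p₁) * ((κ (beta q₁))⁻¹ * κ (beta p₂)) * (κ (beta q₂))⁻¹ := by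
          rw [beta.map_mul, beta.map_mul, κ.map_mul, κ.map_mul, mul_inv_rev, hK']
          noncomm_ring
      _ = κ (beta p₁) * (κ (beta q₁))⁻¹ * (κ (beta p₂) * (κ (beta q₂))⁻¹) := by
          noncomm_ring
  exact ⟨⟨⟨⟨gf, gone⟩, fun x y => gmul x y⟩, gzero, fun x y => gadd x y⟩, gκ⟩

end
end SwapAux

open Polynomial in
/-- The fixed points of a ring endomorphism of a division ring form a subfield. -/
def SwapAux.fixedSubfield {M : Type*} [DivisionRing M] (G : M →+* M) : Subfield M where
  carrier := {z : M | G z = z}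
  zero_mem' := by simp
  one_mem' := by simp
  add_mem' := by
    intro a b ha hb
    simp only [Set.mem_setOf_eq] at *
    rw [G.map_add, ha, hb]
  mul_mem' := by
    intro a b ha hb
    simp only [Set.mem_setOf_eq] at *
    rw [G.map_mul, ha, hb]
  neg_mem' := by
    intro a ha
    simp only [Set.mem_setOf_eq] at *
    rw [G.map_neg, ha]
  inv_mem' := by
    intro a ha
    simp only [Set.mem_setOf_eq] at *
    rw [map_inv₀, ha]

/-
STATEMENT 16 (Lemma `swap`(4)).
For `i ∈ {1, 2}` let `Lᵢ` be a division ring with `ℂ ⊆ Lᵢ ⊆ ℂ(T, σ)` (formalized via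
the images `φ(Lᵢ)`, division subrings of `M = ℍ(X)` between `ℂ` and
`phiImage κ = φ(ℂ(T, σ))`).  If `φ(L₁) ⊆ φ(L₂)` and
`φ(L₂) + φ(L₂)j ⊆ φ(L₁) + φ(L₁)j`, then `L₁ = L₂`.
-/
open Polynomial SwapAux

theorem eq_of_sum_j_subset
    (κ : Polynomial (Quaternion ℝ) →+* M) (hinj : Function.Injective κ)
    (hquot : ∀ z : M, ∃ p q : Polynomial (Quaternion ℝ), q ≠ 0 ∧ z = κ p * (κ q)⁻¹)
    (L₁ L₂ : Subfield M)
    (hC1 : complexSet κ ⊆ (L₁ : Set M)) (hD1 : (L₁ : Set M) ⊆ phiImage κ)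
    (hC2 : complexSet κ ⊆ (L₂ : Set M)) (hD2 : (L₂ : Set M) ⊆ phiImage κ)
    (h12 : (L₁ : Set M) ⊆ (L₂ : Set M))
    (hsum : {z : M | ∃ x ∈ L₂, ∃ y ∈ L₂, z = x + y * jElem κ} ⊆
            {z : M | ∃ x ∈ L₁, ∃ y ∈ L₁, z = x + y * jElem κ}) :
    L₁ = L₂ := by
  obtain ⟨G, hG⟩ := SwapAux.exists_G κ hinj hquot
  have hcIqj : cI qj = -qj := by
    show -(qi * qj * qi) = -qj
    apply Quaternion.ext <;> simp [Quaternion.re_mul, Quaternion.imI_mul, Quaternion.imJ_mul, Quaternion.imK_mul] <;> simp [qi, qj]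
  -- `phiImage κ` is contained in the fixed subfield of `G`
  have hFle : phiImage κ ≤ fixedSubfield G := by
    rw [phiImage]
    apply Subfield.closure_le.mpr
    rintro z (⟨a, rfl⟩ | rfl)
    · show G _ = _
      rw [hG, beta_C]
      congr 2
      show -(qi * qc a * qi) = qc a
      apply Quaternion.ext <;> simp [Quaternion.re_mul, Quaternion.imI_mul, Quaternion.imJ_mul, Quaternion.imK_mul] <;> simp [qi, qc]
    · show G (jXElem κ) = jXElem κ
      rw [jXElem, hG]
      congr 1
      rw [beta.map_mul, beta_C, beta_X, hcIqj, C_neg, neg_mul, mul_neg, neg_neg]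
  have hjne : jElem κ ≠ 0 := by
    rw [jElem]
    apply kne κ hinj
    intro h
    have : qj = 0 := Polynomial.C_eq_zero.mp h
    simpa [qj, Quaternion.imJ_zero] using congrArg QuaternionAlgebra.imJ this
  have hGj : G (jElem κ) = -jElem κ := by
    rw [jElem, hG, beta_C, hcIqj, C_neg, κ.map_neg]
  have hjnot : jElem κ ∉ phiImage κ := by
    intro h
    have hfix : -jElem κ = jElem κ := by rw [← hGj]; exact hFle h
    have h0 : jElem κ + jElem κ = 0 := by
      nth_rewrite 1 [← hfix]
      exact neg_add_cancel _
    rw [← two_mul] at h0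
    have h2 : (2 : M) ≠ 0 := by
      intro h2
      have hκ2 : κ 2 = 0 := by rw [map_ofNat]; exact h2
      have h2p : (2 : Polynomial (Quaternion ℝ)) ≠ 0 := by
        intro hp
        rw [show (2 : Polynomial (Quaternion ℝ)) = Polynomial.C 2 from (map_ofNat C 2).symm] at hp
        have h2q : (2 : Quaternion ℝ) = 0 := Polynomial.C_eq_zero.mp hp
        have h2n : ((2 : ℕ) : Quaternion ℝ) = 0 := by exact_mod_cast h2q
        have h2r := congrArg QuaternionAlgebra.re h2n
        rw [Quaternion.re_natCast] at h2r
        rw [Quaternion.re_zero] at h2r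
        norm_num at h2r
      exact h2p (hinj (hκ2.trans (map_zero κ).symm))
    rcases mul_eq_zero.mp h0 with h | h
    · exact h2 h
    · exact hjne h
  refine le_antisymm (fun x hx => h12 hx) fun x hx => ?_
  obtain ⟨a, ha, b, hb, hxe⟩ := hsum ⟨x, hx, 0, L₂.zero_mem, by rw [zero_mul, add_zero]⟩
  by_cases hb0 : b = 0
  · rw [hxe, hb0, zero_mul, add_zero]
    exact ha
  · exfalso
    apply hjnot
    have hrepr : jElem κ = b⁻¹ * (x - a) := by
      rw [hxe, add_sub_cancel_left, inv_mul_cancel_left₀ hb0]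
    rw [hrepr]
    exact (phiImage κ).mul_mem ((phiImage κ).inv_mem (hD1 hb))
      ((phiImage κ).sub_mem (hD2 hx) (hD1 ha))

end
end

section
/- Let v = T + iT³ ∈ ℂ(T, σ). Then φ(ℂ(v)) is not σ-invariant, i.e., σ(φ(ℂ(v))) ≠ φ(ℂ(v)). -/
noncomputable section

variable {M : Type*} [DivisionRing M]

/-- `φ(v)` for `v = T + iT³ ∈ ℂ(T, σ)`: one has
`φ(v) = jX + i j³ X³ = jX - kX³` in `ℍ(X)`. -/
def phiV (κ : Polynomial (Quaternion ℝ) →+* M) : M :=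
  κ (Polynomial.C qj * Polynomial.X - Polynomial.C qk * Polynomial.X ^ 3)

open Polynomial
open scoped Quaternion QuaternionAlgebra
set_option synthInstance.maxHeartbeats 1000000
set_option maxHeartbeats 1000000

namespace PropConverse

/-! ### quaternion and complex-polynomial preliminaries -/

def qcHom : ℂ →+* Quaternion ℝ where
  toFun := qc
  map_one' := by ext <;> simp [qc]
  map_mul' a b := by ext <;> simp only [Quaternion.re_mul, Quaternion.imI_mul, Quaternion.imJ_mul, Quaternion.imK_mul, Quaternion.re_neg, Quaternion.imI_neg, Quaternion.imJ_neg, Quaternion.imK_neg] <;> simp [qc]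
  map_zero' := by ext <;> simp [qc]
  map_add' a b := by ext <;> simp only [Quaternion.re_add, Quaternion.imI_add, Quaternion.imJ_add, Quaternion.imK_add] <;> simp [qc]

lemma qcHom_injective : Function.Injective qcHom := by
  intro a b h
  have h1 : (qc a).re = (qc b).re := by rw [show qc a = qcHom a from rfl, h]; rfl
  have h2 : (qc a).imI = (qc b).imI := by rw [show qc a = qcHom a from rfl, h]; rfl
  exact Complex.ext h1 h2

lemma qj_ne_zero : qj ≠ 0 := by
  intro h; have := congrArg QuaternionAlgebra.imJ h; simp [qj] at this

lemma qc_I_ne_zero : qc Complex.I ≠ 0 := by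
  intro h; have := congrArg QuaternionAlgebra.imI h; simp [qc] at this

lemma qj_mul_qj : qj * qj = -1 := by ext <;> simp only [Quaternion.re_mul, Quaternion.imI_mul, Quaternion.imJ_mul, Quaternion.imK_mul, Quaternion.re_neg, Quaternion.imI_neg, Quaternion.imJ_neg, Quaternion.imK_neg] <;> simp [qj]
lemma qk_mul_qk : qk * qk = -1 := by ext <;> simp only [Quaternion.re_mul, Quaternion.imI_mul, Quaternion.imJ_mul, Quaternion.imK_mul, Quaternion.re_neg, Quaternion.imI_neg, Quaternion.imJ_neg, Quaternion.imK_neg] <;> simp [qk]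
lemma qj_mul_qk : qj * qk = qc Complex.I := by ext <;> simp only [Quaternion.re_mul, Quaternion.imI_mul, Quaternion.imJ_mul, Quaternion.imK_mul, Quaternion.re_neg, Quaternion.imI_neg, Quaternion.imJ_neg, Quaternion.imK_neg] <;> simp [qj, qk, qc]
lemma qk_mul_qj : qk * qj = -(qc Complex.I) := by ext <;> simp only [Quaternion.re_mul, Quaternion.imI_mul, Quaternion.imJ_mul, Quaternion.imK_mul, Quaternion.re_neg, Quaternion.imI_neg, Quaternion.imJ_neg, Quaternion.imK_neg] <;> simp [qj, qk, qc]
lemma qi_mul_qj : qc Complex.I * qj = qk := by ext <;> simp only [Quaternion.re_mul, Quaternion.imI_mul, Quaternion.imJ_mul, Quaternion.imK_mul, Quaternion.re_neg, Quaternion.imI_neg, Quaternion.imJ_neg, Quaternion.imK_neg] <;> simp [qj, qk, qc]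
lemma qj_mul_qi : qj * qc Complex.I = -(qc Complex.I * qj) := by
  ext <;> simp only [Quaternion.re_mul, Quaternion.imI_mul, Quaternion.imJ_mul, Quaternion.imK_mul, Quaternion.re_neg, Quaternion.imI_neg, Quaternion.imJ_neg, Quaternion.imK_neg] <;> simp [qj, qc]
lemma qj_mul_qc (a : ℂ) : qj * qc a = qc ((starRingEnd ℂ) a) * qj := by
  ext <;> simp only [Quaternion.re_mul, Quaternion.imI_mul, Quaternion.imJ_mul, Quaternion.imK_mul, Quaternion.re_neg, Quaternion.imI_neg, Quaternion.imJ_neg, Quaternion.imK_neg] <;> simp [qj, qc]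
lemma qk_mul_qc (a : ℂ) : qk * qc a = qc ((starRingEnd ℂ) a) * qk := by
  ext <;> simp only [Quaternion.re_mul, Quaternion.imI_mul, Quaternion.imJ_mul, Quaternion.imK_mul, Quaternion.re_neg, Quaternion.imI_neg, Quaternion.imJ_neg, Quaternion.imK_neg] <;> simp [qk, qc]
lemma qsigma_qc (a : ℂ) : qsigma (qc a) = qc ((starRingEnd ℂ) a) := by
  ext <;> simp [qsigma, qc]
lemma qsigma_qj : qsigma qj = qj := by ext <;> simp [qsigma, qj]
lemma qsigma_neg_qk : qsigma (-qk) = qk := by ext <;> simp only [qsigma, Quaternion.re_neg, Quaternion.imI_neg, Quaternion.imJ_neg, Quaternion.imK_neg] <;> simp [qk]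

lemma CX_mul_CX {R : Type*} [Ring R] (a b : R) (m n : ℕ) :
    (C a * X ^ m) * (C b * X ^ n) = C (a * b) * X ^ (m + n) := by
  rw [mul_assoc, X_pow_mul, mul_assoc, ← pow_add, ← mul_assoc, ← C_mul, add_comm]

def cconj : ℂ[X] →+* ℂ[X] := mapRingHom (starRingEnd ℂ)

lemma cconj_cconj (f : ℂ[X]) : cconj (cconj f) = f := by
  ext n
  simp [cconj, coeff_map]

lemma natDegree_cconj (f : ℂ[X]) : (cconj f).natDegree = f.natDegree :=
  natDegree_map (starRingEnd ℂ)

lemma cconj_ne_zero {f : ℂ[X]} (hf : f ≠ 0) : cconj f ≠ 0 := by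
  intro h
  apply hf
  have := congrArg cconj h
  rwa [cconj_cconj, map_zero] at this

def pc : ℂ[X] := -(X ^ 2 + X ^ 6)

lemma natDegree_pc : pc.natDegree = 6 := by
  rw [pc, natDegree_neg]
  compute_degree!

lemma cconj_pc : cconj pc = pc := by
  simp [pc, cconj]

lemma pc_ne_C : ∀ a : ℂ, pc ≠ C a := by
  intro a h
  have := natDegree_pc
  rw [h, natDegree_C] at this
  omega

lemma comp_pc_ne_zero {f : ℂ[X]} (hf : f ≠ 0) : f.comp pc ≠ 0 := by
  intro h
  rcases comp_eq_zero_iff.mp h with h1 | h2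
  · exact hf h1
  · exact pc_ne_C _ h2.2

lemma comp_pc_injective : Function.Injective (fun f : ℂ[X] => f.comp pc) := by
  intro f g h
  dsimp only at h
  by_contra hne
  have : (f - g).comp pc ≠ 0 := comp_pc_ne_zero (sub_ne_zero.mpr hne)
  apply this
  simp only [sub_comp]
  rw [h, sub_self]

lemma natDegree_comp_pc (f : ℂ[X]) : (f.comp pc).natDegree = 6 * f.natDegree := by
  rw [natDegree_comp, natDegree_pc, mul_comm]

lemma cconj_comp_pc (f : ℂ[X]) : cconj (f.comp pc) = (cconj f).comp pc := by
  have : cconj (f.comp pc) = (cconj f).comp (cconj pc) := by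
    simp [cconj, map_comp]
  rw [this, cconj_pc]

def pg : ℂ[X] := 1 - C Complex.I * X ^ 2

lemma natDegree_pg : pg.natDegree = 2 := by
  rw [pg]
  compute_degree!

lemma pg_ne_zero : pg ≠ 0 := by
  intro h
  have := natDegree_pg
  rw [h, natDegree_zero] at this
  omega

lemma fact_A {p q : ℂ[X]} (hp : p ≠ 0) (hq : q ≠ 0) :
    p * cconj p ≠ X * (q * cconj q) := by
  intro h
  have hdeg := congrArg natDegree h
  rw [natDegree_mul hp (cconj_ne_zero hp)] at hdeg
  rw [natDegree_mul (X_ne_zero) (mul_ne_zero hq (cconj_ne_zero hq))] at hdeg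
  rw [natDegree_mul hq (cconj_ne_zero hq)] at hdeg
  rw [natDegree_cconj, natDegree_cconj, natDegree_X] at hdeg
  omega

lemma fact_B {p q : ℂ[X]} (hq : q ≠ 0) : pg * q.comp pc ≠ p.comp pc := by
  intro h
  by_cases hp : p = 0
  · rw [hp, zero_comp] at h
    exact (mul_ne_zero pg_ne_zero (comp_pc_ne_zero hq)) h
  · have hdeg := congrArg natDegree h
    rw [natDegree_mul pg_ne_zero (comp_pc_ne_zero hq), natDegree_pg,
      natDegree_comp_pc, natDegree_comp_pc] at hdeg
    omega

/-! ### transfer to `M` -/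

def pv : Polynomial (Quaternion ℝ) := C qj * X - C qk * X ^ 3

lemma phiV_eq (κ : Polynomial (Quaternion ℝ) →+* M) : phiV κ = κ pv := rfl

def polySigma (p : Polynomial (Quaternion ℝ)) : Polynomial (Quaternion ℝ) :=
  p.sum fun n q => C (qsigma q) * X ^ n

lemma polySigma_add (p q : Polynomial (Quaternion ℝ)) :
    polySigma (p + q) = polySigma p + polySigma q := by
  unfold polySigma
  apply sum_add_index
  · intro i
    have : qsigma 0 = 0 := by ext <;> simp [qsigma]
    simp [this]
  · intro i b₁ b₂
    have : qsigma (b₁ + b₂) = qsigma b₁ + qsigma b₂ := by ext <;> simp only [Quaternion.re_add, Quaternion.imI_add, Quaternion.imJ_add, Quaternion.imK_add] <;> simp [qsigma] <;> ring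
    simp [this, add_mul]

lemma polySigma_CX (a : Quaternion ℝ) (n : ℕ) :
    polySigma (C a * X ^ n) = C (qsigma a) * X ^ n := by
  unfold polySigma
  rw [C_mul_X_pow_eq_monomial, sum_monomial_index]
  have : qsigma 0 = 0 := by ext <;> simp [qsigma]
  simp [this]

lemma hs_apply {κ : Polynomial (Quaternion ℝ) →+* M} {s : M →+* M}
    (hs : IsSigmaExtension κ s) (p : Polynomial (Quaternion ℝ)) :
    s (κ p) = κ (polySigma p) := hs p

def theta (κ : Polynomial (Quaternion ℝ) →+* M) : ℂ[X] →+* M :=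
  κ.comp (mapRingHom qcHom)

lemma theta_apply (κ : Polynomial (Quaternion ℝ) →+* M) (f : ℂ[X]) :
    theta κ f = κ (f.map qcHom) := rfl

lemma theta_injective {κ : Polynomial (Quaternion ℝ) →+* M}
    (hinj : Function.Injective κ) : Function.Injective (theta κ) :=
  hinj.comp (map_injective qcHom qcHom_injective)

lemma polySigma_map (f : ℂ[X]) :
    polySigma (f.map qcHom) = (cconj f).map qcHom := by
  induction f using Polynomial.induction_on' with
  | add p q hp hq =>
    rw [Polynomial.map_add, polySigma_add, hp, hq, map_add, Polynomial.map_add]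
  | monomial n a =>
    rw [← C_mul_X_pow_eq_monomial, Polynomial.map_mul, Polynomial.map_pow, map_C, map_X,
      polySigma_CX, show qsigma (qcHom a) = qc ((starRingEnd ℂ) a) from qsigma_qc a]
    show _ = (mapRingHom qcHom) ((mapRingHom (starRingEnd ℂ)) (C a * X ^ n))
    simp
    rfl

lemma s_theta {κ : Polynomial (Quaternion ℝ) →+* M} {s : M →+* M}
    (hs : IsSigmaExtension κ s) (f : ℂ[X]) :
    s (theta κ f) = theta κ (cconj f) := by
  rw [theta_apply, hs_apply hs, polySigma_map, theta_apply]

lemma polySigma_pv : polySigma pv = C qj * X + C qk * X ^ 3 := by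
  have h : pv = C qj * X ^ 1 + C (-qk) * X ^ 3 := by
    simp [pv, sub_eq_add_neg, neg_mul]
  rw [h, polySigma_add, polySigma_CX, polySigma_CX, qsigma_qj, qsigma_neg_qk, pow_one]

lemma v_plus_sv {κ : Polynomial (Quaternion ℝ) →+* M} {s : M →+* M}
    (hs : IsSigmaExtension κ s) :
    phiV κ + s (phiV κ) = 2 * κ (C qj * X) := by
  rw [phiV_eq, hs_apply hs, polySigma_pv, ← map_add, ← map_ofNat κ 2, ← map_mul]
  congr 1
  rw [pv, two_mul]
  abel

lemma pv1 : pv = C qj * X ^ 1 - C qk * X ^ 3 := by rw [pv, pow_one]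

/-- `pv` conjugates complex-coefficient polynomials. -/
lemma pv_mul_map (f : ℂ[X]) :
    pv * f.map qcHom = (cconj f).map qcHom * pv := by
  induction f using Polynomial.induction_on' with
  | add p q hp hq =>
    rw [Polynomial.map_add, mul_add, hp, hq, map_add, Polynomial.map_add, add_mul]
  | monomial n a =>
    have hm : ∀ b : ℂ, (monomial n b).map qcHom = C (qc b) * X ^ n := by
      intro b; rw [map_monomial, ← C_mul_X_pow_eq_monomial]; rfl
    have hc : cconj (monomial n a) = monomial n ((starRingEnd ℂ) a) := by
      simp [cconj]
    rw [hc, hm, hm, pv1, sub_mul, mul_sub, CX_mul_CX, CX_mul_CX, CX_mul_CX, CX_mul_CX,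
      qj_mul_qc, qk_mul_qc, add_comm 1 n, add_comm 3 n]

lemma v_mul_theta (κ : Polynomial (Quaternion ℝ) →+* M) (f : ℂ[X]) :
    phiV κ * theta κ f = theta κ (cconj f) * phiV κ := by
  rw [phiV_eq, theta_apply, theta_apply, ← map_mul, ← map_mul, pv_mul_map]

lemma map_qcHom_pc : pc.map qcHom = -(X ^ 2 + X ^ 6) := by
  simp [pc]

lemma v_mul_v (κ : Polynomial (Quaternion ℝ) →+* M) :
    phiV κ * phiV κ = theta κ pc := by
  rw [phiV_eq, theta_apply, ← map_mul, map_qcHom_pc]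
  congr 1
  rw [pv1, sub_mul, mul_sub, mul_sub, CX_mul_CX, CX_mul_CX, CX_mul_CX, CX_mul_CX,
    qj_mul_qj, qj_mul_qk, qk_mul_qj, qk_mul_qk]
  norm_num
  abel

lemma map_qcHom_pg : pg.map qcHom = 1 - C (qc Complex.I) * X ^ 2 := by
  simp [pg]
  rfl

lemma g_mul_u (κ : Polynomial (Quaternion ℝ) →+* M) :
    theta κ pg * κ (C qj * X) = phiV κ := by
  rw [theta_apply, phiV_eq, ← map_mul, map_qcHom_pg]
  congr 1
  rw [pv1, sub_mul, one_mul, pow_one]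
  congr 1
  rw [show (C qj * X : Polynomial (Quaternion ℝ)) = C qj * X ^ 1 from by rw [pow_one],
    CX_mul_CX, qi_mul_qj]

lemma u_anti (κ : Polynomial (Quaternion ℝ) →+* M) :
    κ (C qj * X) * theta κ (C Complex.I) = -(theta κ (C Complex.I) * κ (C qj * X)) := by
  have h1 : theta κ (C Complex.I) = κ (C (qc Complex.I)) := by
    rw [theta_apply]; congr 1; simp; rfl
  rw [h1, ← map_mul, ← map_mul, ← map_neg]
  congr 1
  rw [mul_assoc, X_mul, ← mul_assoc, ← C_mul, qj_mul_qi, C_neg, C_mul, neg_mul, mul_assoc]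


/-! ### the subfield `K = ℂ(c)` -/

section Kfield

variable (κ : Polynomial (Quaternion ℝ) →+* M)

/-- `ee f = θ(f ∘ pc)`: "polynomial in `c`". -/
def ee (f : ℂ[X]) : M := theta κ (f.comp pc)

lemma ee_mul (f g : ℂ[X]) : ee κ (f * g) = ee κ f * ee κ g := by
  rw [ee, ee, ee, mul_comp, map_mul]

lemma ee_add (f g : ℂ[X]) : ee κ (f + g) = ee κ f + ee κ g := by
  rw [ee, ee, ee, add_comp, map_add]

lemma ee_neg (f : ℂ[X]) : ee κ (-f) = -ee κ f := by
  rw [ee, ee, neg_comp, map_neg]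

lemma ee_one : ee κ 1 = 1 := by rw [ee, one_comp, map_one]

lemma ee_zero : ee κ 0 = 0 := by rw [ee, zero_comp, map_zero]

lemma ee_X : ee κ X = theta κ pc := by rw [ee, X_comp]

lemma comm_ee (f g : ℂ[X]) : Commute (ee κ f) (ee κ g) := by
  show _ = _
  rw [← ee_mul, ← ee_mul, mul_comm]

variable {κ}

lemma ee_ne_zero (hinj : Function.Injective κ) {f : ℂ[X]} (hf : f ≠ 0) :
    ee κ f ≠ 0 := by
  intro h
  apply comp_pc_ne_zero hf
  apply theta_injective hinj
  rw [map_zero]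
  exact h

lemma ee_inj (hinj : Function.Injective κ) {f g : ℂ[X]} (h : ee κ f = ee κ g) :
    f = g :=
  comp_pc_injective (theta_injective hinj h)

lemma frac_extend (hinj : Function.Injective κ) (p q : ℂ[X]) {r : ℂ[X]} (hr : r ≠ 0) :
    ee κ p * (ee κ q)⁻¹ = ee κ (p * r) * (ee κ (q * r))⁻¹ := by
  symm
  rw [ee_mul, ee_mul, mul_inv_rev, mul_assoc, ← mul_assoc (ee κ r),
    mul_inv_cancel₀ (ee_ne_zero hinj hr), one_mul]

lemma frac_mul (p₁ q₁ p₂ q₂ : ℂ[X]) :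
    (ee κ p₁ * (ee κ q₁)⁻¹) * (ee κ p₂ * (ee κ q₂)⁻¹) =
      ee κ (p₁ * p₂) * (ee κ (q₁ * q₂))⁻¹ := by
  have c1 : Commute ((ee κ q₁)⁻¹) (ee κ p₂) := ((comm_ee κ p₂ q₁).inv_right₀).symm
  rw [mul_assoc, ← mul_assoc ((ee κ q₁)⁻¹), c1.eq, mul_assoc (ee κ p₂), ← mul_assoc,
    ← ee_mul, ← mul_inv_rev, ← ee_mul, mul_comm q₂ q₁]

lemma frac_eq (hinj : Function.Injective κ) {p₁ q₁ p₂ q₂ : ℂ[X]} (hq₁ : q₁ ≠ 0)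
    (hq₂ : q₂ ≠ 0)
    (h : ee κ p₁ * (ee κ q₁)⁻¹ = ee κ p₂ * (ee κ q₂)⁻¹) : p₁ * q₂ = p₂ * q₁ := by
  rw [frac_extend hinj p₁ q₁ hq₂, frac_extend hinj p₂ q₂ hq₁, mul_comm q₂ q₁] at h
  have := mul_right_cancel₀ (inv_ne_zero (ee_ne_zero hinj (mul_ne_zero hq₁ hq₂))) h
  exact ee_inj hinj this

/-- the subfield `ℂ(c) ⊆ M`. -/
def Kc (hinj : Function.Injective κ) : Subfield M where
  carrier := {z | ∃ p q : ℂ[X], q ≠ 0 ∧ z = ee κ p * (ee κ q)⁻¹}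
  one_mem' := ⟨1, 1, one_ne_zero, by rw [ee_one, inv_one, mul_one]⟩
  zero_mem' := ⟨0, 1, one_ne_zero, by rw [ee_zero, zero_mul]⟩
  mul_mem' := by
    rintro x y ⟨p₁, q₁, hq₁, rfl⟩ ⟨p₂, q₂, hq₂, rfl⟩
    exact ⟨p₁ * p₂, q₁ * q₂, mul_ne_zero hq₁ hq₂, frac_mul p₁ q₁ p₂ q₂⟩
  add_mem' := by
    rintro x y ⟨p₁, q₁, hq₁, rfl⟩ ⟨p₂, q₂, hq₂, rfl⟩
    refine ⟨p₁ * q₂ + p₂ * q₁, q₁ * q₂, mul_ne_zero hq₁ hq₂, ?_⟩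
    rw [frac_extend hinj p₁ q₁ hq₂, frac_extend hinj p₂ q₂ hq₁, mul_comm q₂ q₁,
      ee_add, add_mul]
  neg_mem' := by
    rintro x ⟨p, q, hq, rfl⟩
    exact ⟨-p, q, hq, by rw [ee_neg, neg_mul]⟩
  inv_mem' := by
    rintro x ⟨p, q, hq, rfl⟩
    by_cases hp : p = 0
    · refine ⟨0, 1, one_ne_zero, ?_⟩
      rw [hp, ee_zero, zero_mul, inv_zero, zero_mul]
    · refine ⟨q, p, hp, ?_⟩
      rw [mul_inv_rev, inv_inv]

lemma mem_Kc {hinj : Function.Injective κ} {z : M} :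
    z ∈ Kc hinj ↔ ∃ p q : ℂ[X], q ≠ 0 ∧ z = ee κ p * (ee κ q)⁻¹ := Iff.rfl

lemma Kc_comm {hinj : Function.Injective κ} {a b : M}
    (ha : a ∈ Kc hinj) (hb : b ∈ Kc hinj) : a * b = b * a := by
  obtain ⟨p₁, q₁, hq₁, rfl⟩ := ha
  obtain ⟨p₂, q₂, hq₂, rfl⟩ := hb
  have : Commute (ee κ p₁ * (ee κ q₁)⁻¹) (ee κ p₂ * (ee κ q₂)⁻¹) := by
    apply Commute.mul_left
    · exact Commute.mul_right (comm_ee κ p₁ p₂) ((comm_ee κ p₁ q₂).inv_right₀)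
    · exact Commute.mul_right ((comm_ee κ q₁ p₂).inv_left₀)
        (((comm_ee κ q₁ q₂).inv_right₀).inv_left₀)
  exact this.eq

lemma c_mem_Kc {hinj : Function.Injective κ} : theta κ pc ∈ Kc hinj :=
  ⟨X, 1, one_ne_zero, by rw [ee_one, inv_one, mul_one, ee, X_comp]⟩

lemma const_mem_Kc {hinj : Function.Injective κ} (a : ℂ) : theta κ (C a) ∈ Kc hinj :=
  ⟨C a, 1, one_ne_zero, by rw [ee_one, inv_one, mul_one, ee, C_comp]⟩

variable {s : M →+* M}

lemma s_ee (hs : IsSigmaExtension κ s) (f : ℂ[X]) :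
    s (ee κ f) = ee κ (cconj f) := by
  rw [ee, ee, s_theta hs, cconj_comp_pc]

lemma s_frac (hs : IsSigmaExtension κ s) (p q : ℂ[X]) :
    s (ee κ p * (ee κ q)⁻¹) = ee κ (cconj p) * (ee κ (cconj q))⁻¹ := by
  rw [map_mul, map_inv₀, s_ee hs, s_ee hs]

lemma s_mem_Kc {hinj : Function.Injective κ} (hs : IsSigmaExtension κ s) {a : M}
    (ha : a ∈ Kc hinj) : s a ∈ Kc hinj := by
  obtain ⟨p, q, hq, rfl⟩ := ha
  exact ⟨cconj p, cconj q, cconj_ne_zero hq, s_frac hs p q⟩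

lemma s_s_Kc {hinj : Function.Injective κ} (hs : IsSigmaExtension κ s) {a : M}
    (ha : a ∈ Kc hinj) : s (s a) = a := by
  obtain ⟨p, q, hq, rfl⟩ := ha
  rw [s_frac hs, s_frac hs, cconj_cconj, cconj_cconj]

lemma v_mul_ee (f : ℂ[X]) :
    phiV κ * ee κ f = ee κ (cconj f) * phiV κ := by
  rw [ee, ee, v_mul_theta, cconj_comp_pc]

lemma v_mul_Kc {hinj : Function.Injective κ} (hs : IsSigmaExtension κ s) {a : M}
    (ha : a ∈ Kc hinj) : phiV κ * a = s a * phiV κ := by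
  obtain ⟨p, q, hq, rfl⟩ := ha
  rw [s_frac hs]
  have hq0 : ee κ q ≠ 0 := ee_ne_zero hinj hq
  have hcq : ee κ (cconj q) ≠ 0 := ee_ne_zero hinj (cconj_ne_zero hq)
  have h1 : phiV κ * (ee κ q)⁻¹ = (ee κ (cconj q))⁻¹ * phiV κ := by
    apply mul_left_cancel₀ hcq
    rw [← mul_assoc, ← v_mul_ee, mul_assoc, mul_inv_cancel₀ hq0, mul_one,
      ← mul_assoc, mul_inv_cancel₀ hcq, one_mul]
  rw [← mul_assoc, v_mul_ee, mul_assoc, h1, ← mul_assoc]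

end Kfield

/-! ### the division subring `D = K ⊕ Kv` -/

section Dfield

variable {κ : Polynomial (Quaternion ℝ) →+* M} {s : M →+* M}

/-- generalized degree obstruction. -/
lemma fact_A' {p₁ q₁ p₂ q₂ : ℂ[X]} (hp₁ : p₁ ≠ 0) (hq₁ : q₁ ≠ 0) (hp₂ : p₂ ≠ 0)
    (hq₂ : q₂ ≠ 0) :
    (p₁ * cconj p₁) * (q₂ * cconj q₂) ≠ (p₂ * cconj p₂ * X) * (q₁ * cconj q₁) := by
  intro h
  have hdeg := congrArg natDegree h
  have h1 : p₁ * cconj p₁ ≠ 0 := mul_ne_zero hp₁ (cconj_ne_zero hp₁)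
  have h2 : q₂ * cconj q₂ ≠ 0 := mul_ne_zero hq₂ (cconj_ne_zero hq₂)
  have h3 : p₂ * cconj p₂ ≠ 0 := mul_ne_zero hp₂ (cconj_ne_zero hp₂)
  have h4 : q₁ * cconj q₁ ≠ 0 := mul_ne_zero hq₁ (cconj_ne_zero hq₁)
  rw [natDegree_mul h1 h2, natDegree_mul (mul_ne_zero h3 X_ne_zero) h4,
    natDegree_mul h3 X_ne_zero, natDegree_mul hp₁ (cconj_ne_zero hp₁),
    natDegree_mul hq₂ (cconj_ne_zero hq₂), natDegree_mul hp₂ (cconj_ne_zero hp₂),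
    natDegree_mul hq₁ (cconj_ne_zero hq₁), natDegree_X,
    natDegree_cconj, natDegree_cconj, natDegree_cconj, natDegree_cconj] at hdeg
  omega

lemma theta_pc_ne_zero (hinj : Function.Injective κ) : theta κ pc ≠ 0 := by
  intro h
  have : pc = 0 := theta_injective hinj (by rw [h, map_zero])
  have h6 := natDegree_pc
  rw [this, natDegree_zero] at h6
  omega

/-- the crucial nonvanishing of the "norm" `N = a·σ(a) − b·σ(b)·c`. -/
lemma norm_ne_zero (hinj : Function.Injective κ) (hs : IsSigmaExtension κ s) {a b : M}
    (ha : a ∈ Kc hinj) (hb : b ∈ Kc hinj) (hab : ¬(a = 0 ∧ b = 0)) :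
    a * s a - b * s b * theta κ pc ≠ 0 := by
  intro hN0
  rw [sub_eq_zero] at hN0
  obtain ⟨p₁, q₁, hq₁, rfl⟩ := ha
  obtain ⟨p₂, q₂, hq₂, rfl⟩ := hb
  have hcomm : (ee κ (q₂ * cconj q₂))⁻¹ * ee κ X = ee κ X * (ee κ (q₂ * cconj q₂))⁻¹ :=
    ((comm_ee κ (q₂ * cconj q₂) X).inv_left₀).eq
  rw [s_frac hs, s_frac hs, frac_mul, frac_mul, ← ee_X, mul_assoc, hcomm, ← mul_assoc,
    ← ee_mul] at hN0
  -- hN0 : ee (p₁ * cconj p₁) * (ee (q₁ * cconj q₁))⁻¹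
  --      = ee (p₂ * cconj p₂ * X) * (ee (q₂ * cconj q₂))⁻¹
  by_cases hp₂ : p₂ = 0
  · -- b = 0, so a ≠ 0, i.e. p₁ ≠ 0, but lhs = 0 forces p₁ * cconj p₁ = 0
    have hb0 : ee κ p₂ * (ee κ q₂)⁻¹ = 0 := by rw [hp₂, ee_zero, zero_mul]
    have hp₁ : p₁ ≠ 0 := by
      intro hp₁
      exact hab ⟨by rw [hp₁, ee_zero, zero_mul], hb0⟩
    rw [hp₂] at hN0
    have : (0 : ℂ[X]) * cconj 0 * X = 0 := by rw [map_zero, mul_zero, zero_mul]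
    rw [this, ee_zero, zero_mul] at hN0
    have h0 : ee κ (p₁ * cconj p₁) = 0 := by
      have := congrArg (· * ee κ (q₁ * cconj q₁)) hN0
      simpa [mul_assoc, inv_mul_cancel₀
        (ee_ne_zero hinj (mul_ne_zero hq₁ (cconj_ne_zero hq₁)))] using this
    exact ee_ne_zero hinj (mul_ne_zero hp₁ (cconj_ne_zero hp₁)) h0
  · by_cases hp₁ : p₁ = 0
    · -- a = 0 but b ≠ 0 : rhs nonzero, lhs zero
      rw [hp₁] at hN0
      have : (0 : ℂ[X]) * cconj 0 = 0 := by rw [map_zero, mul_zero]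
      rw [this, ee_zero, zero_mul] at hN0
      have hr : ee κ (p₂ * cconj p₂ * X) * (ee κ (q₂ * cconj q₂))⁻¹ ≠ 0 :=
        mul_ne_zero
          (ee_ne_zero hinj (mul_ne_zero (mul_ne_zero hp₂ (cconj_ne_zero hp₂)) X_ne_zero))
          (inv_ne_zero (ee_ne_zero hinj (mul_ne_zero hq₂ (cconj_ne_zero hq₂))))
      exact hr hN0.symm
    · have hpoly := frac_eq hinj (mul_ne_zero hq₁ (cconj_ne_zero hq₁))
        (mul_ne_zero hq₂ (cconj_ne_zero hq₂)) hN0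
      exact fact_A' hp₁ hq₁ hp₂ hq₂ hpoly

/-- the division subring `D = K + K·v` as a subfield of `M`. -/
def Dsub (hinj : Function.Injective κ) (hs : IsSigmaExtension κ s) : Subfield M where
  carrier := {z | ∃ a b : M, a ∈ Kc hinj ∧ b ∈ Kc hinj ∧ z = a + b * phiV κ}
  one_mem' := ⟨1, 0, one_mem _, zero_mem _, by rw [zero_mul, add_zero]⟩
  zero_mem' := ⟨0, 0, zero_mem _, zero_mem _, by rw [zero_mul, add_zero]⟩
  add_mem' := by
    rintro x y ⟨a, b, ha, hb, rfl⟩ ⟨a', b', ha', hb', rfl⟩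
    exact ⟨a + a', b + b', add_mem ha ha', add_mem hb hb', by noncomm_ring⟩
  neg_mem' := by
    rintro x ⟨a, b, ha, hb, rfl⟩
    exact ⟨-a, -b, neg_mem ha, neg_mem hb, by noncomm_ring⟩
  mul_mem' := by
    rintro x y ⟨a, b, ha, hb, rfl⟩ ⟨a', b', ha', hb', rfl⟩
    refine ⟨a * a' + b * s b' * theta κ pc, a * b' + b * s a',
      add_mem (mul_mem ha ha') (mul_mem (mul_mem hb (s_mem_Kc hs hb')) c_mem_Kc),
      add_mem (mul_mem ha hb') (mul_mem hb (s_mem_Kc hs ha')), ?_⟩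
    have h1 : phiV κ * a' = s a' * phiV κ := v_mul_Kc hs ha'
    have h2 : phiV κ * b' = s b' * phiV κ := v_mul_Kc hs hb'
    have h3 : phiV κ * phiV κ = theta κ pc := v_mul_v κ
    calc (a + b * phiV κ) * (a' + b' * phiV κ)
        = a * a' + a * (b' * phiV κ) +
            (b * (phiV κ * a') + b * ((phiV κ * b') * phiV κ)) := by noncomm_ring
      _ = a * a' + a * (b' * phiV κ) +
            (b * (s a' * phiV κ) + b * (s b' * (phiV κ * phiV κ))) := by
          rw [h1, h2, mul_assoc (s b')]
      _ = a * a' + a * (b' * phiV κ) +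
            (b * (s a' * phiV κ) + b * (s b' * theta κ pc)) := by rw [h3]
      _ = a * a' + b * s b' * theta κ pc + (a * b' + b * s a') * phiV κ := by
          noncomm_ring
  inv_mem' := by
    rintro x ⟨a, b, ha, hb, rfl⟩
    by_cases hz : a + b * phiV κ = 0
    · refine ⟨0, 0, zero_mem _, zero_mem _, ?_⟩
      rw [hz, inv_zero, zero_mul, add_zero]
    · set N : M := a * s a - b * s b * theta κ pc with hNdef
      have hab : ¬(a = 0 ∧ b = 0) := by
        rintro ⟨rfl, rfl⟩
        exact hz (by rw [zero_mul, add_zero])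
      have hN : N ≠ 0 := norm_ne_zero hinj hs ha hb hab
      have hNmem : N ∈ Kc hinj :=
        sub_mem (mul_mem ha (s_mem_Kc hs ha))
          (mul_mem (mul_mem hb (s_mem_Kc hs hb)) c_mem_Kc)
      have hwsa : phiV κ * s a = a * phiV κ := by
        rw [v_mul_Kc hs (s_mem_Kc hs ha), s_s_Kc hs ha]
      have hwb : phiV κ * b = s b * phiV κ := v_mul_Kc hs hb
      have h3 : phiV κ * phiV κ = theta κ pc := v_mul_v κ
      have hba : a * b = b * a := Kc_comm ha hb
      have hy : (a + b * phiV κ) * (s a - b * phiV κ) = N := by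
        calc (a + b * phiV κ) * (s a - b * phiV κ)
            = a * s a - a * b * phiV κ + (b * (phiV κ * s a)
                - b * ((phiV κ * b) * phiV κ)) := by noncomm_ring
          _ = a * s a - a * b * phiV κ + (b * (a * phiV κ)
                - b * (s b * (phiV κ * phiV κ))) := by
              rw [hwsa, hwb, mul_assoc (s b)]
          _ = a * s a - b * a * phiV κ + (b * a * phiV κ
                - b * s b * theta κ pc) := by rw [h3, hba]; noncomm_ring
          _ = N := by rw [hNdef]; noncomm_ring
      have hNinv : N⁻¹ ∈ Kc hinj := inv_mem hNmem
      have hwN : phiV κ * N⁻¹ = s N⁻¹ * phiV κ := v_mul_Kc hs hNinv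
      refine ⟨s a * N⁻¹, -(b * s N⁻¹), mul_mem (s_mem_Kc hs ha) hNinv,
        neg_mem (mul_mem hb (s_mem_Kc hs hNinv)), ?_⟩
      have hone : (a + b * phiV κ) * ((s a - b * phiV κ) * N⁻¹) = 1 := by
        rw [← mul_assoc, hy, mul_inv_cancel₀ hN]
      have hinv : (a + b * phiV κ)⁻¹ = (s a - b * phiV κ) * N⁻¹ := by
        calc (a + b * phiV κ)⁻¹
            = (a + b * phiV κ)⁻¹ * ((a + b * phiV κ) * ((s a - b * phiV κ) * N⁻¹)) := by
              rw [hone, mul_one]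
          _ = (s a - b * phiV κ) * N⁻¹ := by
              rw [← mul_assoc, inv_mul_cancel₀ hz, one_mul]
      rw [hinv]
      calc (s a - b * phiV κ) * N⁻¹
          = s a * N⁻¹ - b * (phiV κ * N⁻¹) := by noncomm_ring
        _ = s a * N⁻¹ - b * (s N⁻¹ * phiV κ) := by rw [hwN]
        _ = s a * N⁻¹ + -(b * s N⁻¹) * phiV κ := by noncomm_ring

lemma mem_Dsub {hinj : Function.Injective κ} {hs : IsSigmaExtension κ s} {z : M} :
    z ∈ Dsub hinj hs ↔
      ∃ a b : M, a ∈ Kc hinj ∧ b ∈ Kc hinj ∧ z = a + b * phiV κ := Iff.rfl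

end Dfield

/-! ### the main theorem -/

section Main

variable {κ : Polynomial (Quaternion ℝ) →+* M} {s : M →+* M}

lemma two_ne_zero' (hinj : Function.Injective κ) : (2 : M) ≠ 0 := by
  intro h
  have h2 : κ (2 : Polynomial (Quaternion ℝ)) = 2 := map_ofNat κ 2
  have hzero : (2 : Polynomial (Quaternion ℝ)) = 0 := hinj (by rw [h2, h, map_zero])
  have hC : (C (2 : Quaternion ℝ) : Polynomial (Quaternion ℝ)) = 2 := map_ofNat C 2
  rw [← hC, C_eq_zero] at hzero
  have h22 : ((2 : ℕ) : Quaternion ℝ) = 0 := by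
    rw [Nat.cast_ofNat]
    exact hzero
  have hre := congrArg QuaternionAlgebra.re h22
  rw [Quaternion.re_natCast] at hre
  norm_num at hre

lemma u_ne_zero (hinj : Function.Injective κ) : κ (C qj * X) ≠ 0 := by
  intro h
  have : (C qj * X : Polynomial (Quaternion ℝ)) = 0 := hinj (by rw [h, map_zero])
  have hc := congrArg (fun p => coeff p 1) this
  simp [coeff_C_mul] at hc
  exact qj_ne_zero hc

lemma iota_ne_zero (hinj : Function.Injective κ) : theta κ (C Complex.I) ≠ 0 := by
  intro h
  have : (C Complex.I : ℂ[X]) = 0 := theta_injective hinj (by rw [h, map_zero])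
  rw [C_eq_zero] at this
  exact Complex.I_ne_zero this

lemma s_iota (hs : IsSigmaExtension κ s) :
    s (theta κ (C Complex.I)) = -(theta κ (C Complex.I)) := by
  rw [s_theta hs]
  have : cconj (C Complex.I) = -(C Complex.I) := by
    simp [cconj, Complex.conj_I]
  rw [this, map_neg]

lemma u_not_mem_Dsub (hinj : Function.Injective κ) (hs : IsSigmaExtension κ s) :
    κ (C qj * X) ∉ Dsub hinj hs := by
  rintro ⟨a, b, ha, hb, hu⟩
  set u : M := κ (C qj * X) with hudef
  set ι : M := theta κ (C Complex.I) with hιdef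
  have hιK : ι ∈ Kc hinj := const_mem_Kc Complex.I
  have hwι : phiV κ * ι = -ι * phiV κ := by
    rw [v_mul_Kc hs hιK, s_iota hs, neg_mul]
  have haι : a * ι = ι * a := Kc_comm ha hιK
  have hbι : b * ι = ι * b := Kc_comm hb hιK
  -- step 1 : a = 0
  have hanti : u * ι = -(ι * u) := u_anti κ
  have hsum : (a + b * phiV κ) * ι + ι * (a + b * phiV κ) = 0 := by
    rw [← hu, hanti, neg_add_cancel]
  have h2a : (2 : M) * (a * ι) = 0 := by
    rw [← hsum]
    symm
    calc (a + b * phiV κ) * ι + ι * (a + b * phiV κ)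
        = a * ι + b * (phiV κ * ι) + (ι * a + ι * b * phiV κ) := by noncomm_ring
      _ = a * ι + b * (-ι * phiV κ) + (a * ι + b * ι * phiV κ) := by
          rw [hwι, ← haι, ← hbι]
      _ = 2 * (a * ι) := by noncomm_ring
  have ha0 : a = 0 := by
    have := mul_eq_zero.mp h2a
    rcases this with h | h
    · exact absurd h (two_ne_zero' hinj)
    · rcases mul_eq_zero.mp h with h' | h'
      · exact h'
      · exact absurd h' (iota_ne_zero hinj)
  -- step 2 : contradiction via degrees
  rw [ha0, zero_add] at hu
  have hg : theta κ pg * u = phiV κ := g_mul_u κ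
  have hbg : (b * theta κ pg) * u = 1 * u := by
    rw [one_mul, mul_assoc, hg, ← hu]
  have hbg1 : b * theta κ pg = 1 := mul_right_cancel₀ (u_ne_zero hinj) hbg
  have hbne : b ≠ 0 := left_ne_zero_of_mul_eq_one hbg1
  have hginv : theta κ pg = b⁻¹ := by
    rw [← one_mul (theta κ pg), ← inv_mul_cancel₀ hbne, mul_assoc, hbg1, mul_one]
  have hgK : theta κ pg ∈ Kc hinj := by
    rw [hginv]
    exact inv_mem hb
  obtain ⟨p, q, hq, hrep⟩ := hgK
  have hfin : theta κ (pg * q.comp pc) = theta κ (p.comp pc) := by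
    rw [map_mul]
    show theta κ pg * ee κ q = ee κ p
    rw [hrep, mul_assoc, inv_mul_cancel₀ (ee_ne_zero hinj hq), mul_one]
  exact fact_B hq (theta_injective hinj hfin)

theorem main_converse (κ : Polynomial (Quaternion ℝ) →+* M)
    (hinj : Function.Injective κ)
    (s : M →+* M) (hs : IsSigmaExtension κ s) :
    s '' (Subfield.closure (complexSet κ ∪ {phiV κ}) : Set M) ≠
      (Subfield.closure (complexSet κ ∪ {phiV κ}) : Set M) := by
  intro h
  set L : Subfield M := Subfield.closure (complexSet κ ∪ {phiV κ}) with hL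
  have hv : phiV κ ∈ L := Subfield.subset_closure (Or.inr rfl)
  have hsv : s (phiV κ) ∈ L := by
    have : s (phiV κ) ∈ s '' (L : Set M) := ⟨_, hv, rfl⟩
    rwa [h] at this
  have h2L : (2 : M) ∈ L := by
    have := add_mem (one_mem L) (one_mem L)
    rwa [one_add_one_eq_two] at this
  have huL : κ (C qj * X) ∈ L := by
    have h2u : (2 : M) * κ (C qj * X) = phiV κ + s (phiV κ) := (v_plus_sv hs).symm
    have : κ (C qj * X) = (2 : M)⁻¹ * ((2 : M) * κ (C qj * X)) := by
      rw [← mul_assoc, inv_mul_cancel₀ (two_ne_zero' hinj), one_mul]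
    rw [this, h2u]
    exact mul_mem (inv_mem h2L) (add_mem hv hsv)
  have hLD : L ≤ Dsub hinj hs := by
    rw [hL]
    apply Subfield.closure_le.mpr
    apply Set.union_subset
    · rintro z ⟨a, rfl⟩
      show κ (C (qc a)) ∈ Dsub hinj hs
      have hz : κ (C (qc a)) = theta κ (C a) := by
        rw [theta_apply, map_C]
        rfl
      rw [hz]
      exact ⟨theta κ (C a), 0, const_mem_Kc a, zero_mem _, by rw [zero_mul, add_zero]⟩
    · rintro z rfl
      exact ⟨0, 1, zero_mem _, one_mem _, by rw [one_mul, zero_add]⟩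
  exact u_not_mem_Dsub hinj hs (hLD huL)

end Main

end PropConverse

/-
STATEMENT 18 (Proposition `converse`).
Let `v = T + iT³ ∈ ℂ(T, σ)`.  Then `φ(ℂ(v))` is not `σ`-invariant:
`σ(φ(ℂ(v))) ≠ φ(ℂ(v))`.  Here `φ(ℂ(v))` is the smallest division subring of
`M = ℍ(X)` containing `ℂ` and `φ(v) = jX - kX³`, and `σ` on `ℍ(X)` is any ring
homomorphism `s` extending the coefficientwise conjugation of `ℍ[X]`.
-/
theorem phi_closure_v_not_sigma_invariant
    (κ : Polynomial (Quaternion ℝ) →+* M) (hinj : Function.Injective κ)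
    (hquot : ∀ z : M, ∃ p q : Polynomial (Quaternion ℝ), q ≠ 0 ∧ z = κ p * (κ q)⁻¹)
    (s : M →+* M) (hs : IsSigmaExtension κ s) :
    s '' (Subfield.closure (complexSet κ ∪ {phiV κ}) : Set M) ≠
      (Subfield.closure (complexSet κ ∪ {phiV κ}) : Set M) := by
  exact PropConverse.main_converse κ hinj s hs

end
end
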